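/- arXiv:1406.3140 — 6 statements merged into one kernel-verified Lean document; each statement's English description precedes it below -/
import Mathlib

section
/- Let 0 ≤ k ≤ m. Let p₀ be an arbitrary product distribution on {0,1}^n, let p₁, …, p_{m-k} be product distributions supported on pairwise disjoint faces of the n-cube, and let p_{m-k+1}, …, p_m be arbitrary probability distributions each supported on some edge of the n-cube. Then every convex combination p = Σ_{i=0}^{m} α_i p_i (α_i ≥ 0, Σ_i α_i = 1) belongs to RBM_{n,m}. -/
open scoped BigOperators

noncomputable section

/-- The real value of a Boolean. -/
def bval (b : Bool) : ℝ := if b then 1 else 0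

/-- `p` is a probability distribution on the finite set `X`. -/
def IsProb {X : Type*} [Fintype X] (p : X → ℝ) : Prop :=
  (∀ x, 0 ≤ p x) ∧ ∑ x, p x = 1

/-- One term of the Kullback-Leibler divergence (base-2 logarithm); terms with `a = 0` are `0`. -/
noncomputable def klTerm (a b : ℝ) : ℝ := if a = 0 then 0 else a * Real.logb 2 (a / b)

/-- Kullback-Leibler divergence with base-2 logarithm; it is `⊤ = ∞` if the support of `q`
does not contain the support of `p`. -/
noncomputable def KL {X : Type*} [Fintype X] (p q : X → ℝ) : EReal :=
  if ∀ x, p x ≠ 0 → q x ≠ 0 then ((∑ x, klTerm (p x) (q x) : ℝ) : EReal) else ⊤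

/-- The divergence from `p` to a set `M` of distributions: `inf_{q ∈ M} D(p‖q)`. -/
noncomputable def KLset {X : Type*} [Fintype X] (p : X → ℝ) (M : Set (X → ℝ)) : EReal :=
  ⨅ q ∈ M, KL p q

/-- The visible distribution `p_{W,C,B}` of an RBM with `n` visible and `m` hidden units. -/
noncomputable def rbmDist (n m : ℕ) (W : Matrix (Fin m) (Fin n) ℝ) (C : Fin m → ℝ)
    (B : Fin n → ℝ) : (Fin n → Bool) → ℝ := fun v =>
  (∑ h : Fin m → Bool,
      Real.exp ((∑ j, ∑ i, bval (h j) * W j i * bval (v i)) +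
        (∑ j, C j * bval (h j)) + (∑ i, B i * bval (v i)))) /
  (∑ v' : Fin n → Bool, ∑ h : Fin m → Bool,
      Real.exp ((∑ j, ∑ i, bval (h j) * W j i * bval (v' i)) +
        (∑ j, C j * bval (h j)) + (∑ i, B i * bval (v' i))))

/-- The RBM model `RBM_{n,m}`: the closure (in `ℝ^{{0,1}^n}`) of the set of visible
distributions representable with some choice of the parameters. -/
noncomputable def RBM (n m : ℕ) : Set ((Fin n → Bool) → ℝ) :=
  closure { p | ∃ (W : Matrix (Fin m) (Fin n) ℝ) (C : Fin m → ℝ) (B : Fin n → ℝ),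
    p = rbmDist n m W C B }

/-- `p` is a product distribution on `{0,1}^n`. -/
def IsProductDist {n : ℕ} (p : (Fin n → Bool) → ℝ) : Prop :=
  ∃ f : Fin n → Bool → ℝ, (∀ i, IsProb (f i)) ∧ ∀ v, p v = ∏ i, f i (v i)

/-- A face (cubical subset) of the `n`-cube: the coordinates outside `I` are fixed to `u`. -/
def IsFace {n : ℕ} (F : Set (Fin n → Bool)) : Prop :=
  ∃ (I : Finset (Fin n)) (u : Fin n → Bool), F = {x | ∀ i ∉ I, x i = u i}

/-- An edge of the `n`-cube: a pair of vectors differing in exactly one entry. -/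
def IsEdge {n : ℕ} (E : Set (Fin n → Bool)) : Prop :=
  ∃ (x : Fin n → Bool) (i : Fin n), E = {x, Function.update x i (!x i)}
open Filter Real in
/-- Admissible limit activation functions: pointwise limits of `exp (c + w · v)`. -/
def Adm (n : ℕ) (lam : (Fin n → Bool) → ℝ) : Prop :=
  ∃ (c : ℕ → ℝ) (w : ℕ → Fin n → ℝ), ∀ v,
    Tendsto (fun t => Real.exp (c t + ∑ i, w t i * bval (v i))) atTop (nhds (lam v))

lemma adm_nonneg {n : ℕ} {lam : (Fin n → Bool) → ℝ} (h : Adm n lam) (v : Fin n → Bool) :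
    0 ≤ lam v := by
  obtain ⟨c, w, hcw⟩ := h
  exact ge_of_tendsto (hcw v) (Filter.Eventually.of_forall fun t => (Real.exp_pos _).le)

lemma admB (n : ℕ) (I : Finset (Fin n)) (u : Fin n → Bool) (a : Fin n → ℝ) (c : ℝ) :
    Adm n (fun v => if ∀ i ∉ I, v i = u i
      then Real.exp (c + ∑ i ∈ I, a i * bval (v i)) else 0) := by
  classical
  refine ⟨fun t => c - t * ∑ i ∈ Iᶜ, bval (u i),
          fun t i => if i ∈ I then a i else (t : ℝ) * (if u i then 1 else -1), fun v => ?_⟩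
  have key : ∀ t : ℕ,
      (c - t * ∑ i ∈ Iᶜ, bval (u i)) +
        ∑ i, (if i ∈ I then a i else (t : ℝ) * (if u i then 1 else -1)) * bval (v i)
      = (c + ∑ i ∈ I, a i * bval (v i)) +
        t * ∑ i ∈ Iᶜ, ((if u i then 1 else -1) * bval (v i) - bval (u i)) := by
    intro t
    have h1 : ∑ i ∈ I, (if i ∈ I then a i else (t : ℝ) * (if u i then 1 else -1)) * bval (v i)
        = ∑ i ∈ I, a i * bval (v i) :=
      Finset.sum_congr rfl fun i hi => by rw [if_pos hi]
    have h2 : ∑ i ∈ Iᶜ, (if i ∈ I then a i else (t : ℝ) * (if u i then 1 else -1)) * bval (v i)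
        = (t : ℝ) * ∑ i ∈ Iᶜ, (if u i then 1 else -1) * bval (v i) := by
      rw [Finset.mul_sum]
      exact Finset.sum_congr rfl fun i hi => by rw [if_neg (Finset.mem_compl.mp hi)]; ring
    rw [← Finset.sum_add_sum_compl I
        (fun i => (if i ∈ I then a i else (t : ℝ) * (if u i then 1 else -1)) * bval (v i)),
      h1, h2, Finset.sum_sub_distrib]
    ring
  simp only [key]
  by_cases hv : ∀ i ∉ I, v i = u i
  · rw [if_pos hv]
    have hD : ∑ i ∈ Iᶜ, ((if u i then 1 else -1) * bval (v i) - bval (u i)) = 0 := by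
      refine Finset.sum_eq_zero fun i hi => ?_
      rw [hv i (Finset.mem_compl.mp hi)]
      cases u i <;> norm_num [bval]
    simp only [hD, mul_zero, add_zero]
    exact tendsto_const_nhds
  · rw [if_neg hv]
    push_neg at hv
    obtain ⟨i0, hi0, hne⟩ := hv
    set D := ∑ i ∈ Iᶜ, ((if u i then 1 else -1) * bval (v i) - bval (u i)) with hDdef
    have hterm : ∀ i, (if u i then (1:ℝ) else -1) * bval (v i) - bval (u i) ≤ 0 := by
      intro i; cases hui : u i <;> cases hvi : v i <;> norm_num [bval]
    have hD : D ≤ -1 := by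
      have hmem : i0 ∈ Iᶜ := Finset.mem_compl.mpr hi0
      have h0 : (if u i0 then (1:ℝ) else -1) * bval (v i0) - bval (u i0) = -1 := by
        cases hui : u i0 <;> cases hvi : v i0 <;> simp_all [bval]
      have hrest : ∑ i ∈ Iᶜ.erase i0, ((if u i then (1:ℝ) else -1) * bval (v i) - bval (u i)) ≤ 0 :=
        Finset.sum_nonpos fun i _ => hterm i
      have hsplit : D = ((if u i0 then (1:ℝ) else -1) * bval (v i0) - bval (u i0)) +
          ∑ i ∈ Iᶜ.erase i0, ((if u i then (1:ℝ) else -1) * bval (v i) - bval (u i)) := by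
        rw [hDdef]; exact (Finset.add_sum_erase _ _ hmem).symm
      rw [hsplit, h0]; linarith
    have hexp : ∀ t : ℕ, Real.exp ((c + ∑ i ∈ I, a i * bval (v i)) + t * D)
        = Real.exp (c + ∑ i ∈ I, a i * bval (v i)) * Real.exp D ^ t := by
      intro t; rw [Real.exp_add, Real.exp_nat_mul]
    simp only [hexp]
    have hlt : Real.exp D < 1 := Real.exp_lt_one_iff.mpr (by linarith)
    have := (tendsto_pow_atTop_nhds_zero_of_lt_one (Real.exp_pos D).le hlt).const_mul
      (Real.exp (c + ∑ i ∈ I, a i * bval (v i)))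
    simpa using this

lemma admC (n : ℕ) (I : Finset (Fin n)) (u : Fin n → Bool) (c0 : ℝ) (hc0 : 0 < c0)
    (ρ : Fin n → Bool → ℝ) (hρ : ∀ i ∈ I, ∀ b, 0 < ρ i b) :
    Adm n (fun v => if ∀ i ∉ I, v i = u i then c0 * ∏ i ∈ I, ρ i (v i) else 0) := by
  have heq : (fun v : Fin n → Bool => if ∀ i ∉ I, v i = u i
        then c0 * ∏ i ∈ I, ρ i (v i) else 0)
      = (fun v => if ∀ i ∉ I, v i = u i
        then Real.exp ((Real.log c0 + ∑ i ∈ I, Real.log (ρ i false)) +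
          ∑ i ∈ I, (Real.log (ρ i true) - Real.log (ρ i false)) * bval (v i)) else 0) := by
    funext v
    by_cases hv : ∀ i ∉ I, v i = u i
    · rw [if_pos hv, if_pos hv]
      have hmain : Real.exp ((Real.log c0 + ∑ i ∈ I, Real.log (ρ i false)) +
          ∑ i ∈ I, (Real.log (ρ i true) - Real.log (ρ i false)) * bval (v i))
          = c0 * ∏ i ∈ I, ρ i (v i) := by
        rw [add_assoc, Real.exp_add, Real.exp_log hc0, ← Finset.sum_add_distrib, Real.exp_sum]
        congr 1
        refine Finset.prod_congr rfl fun i hi => ?_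
        cases hvi : v i
        · simp [bval, Real.exp_log (hρ i hi false)]
        · have h2 : Real.log (ρ i false) +
              (Real.log (ρ i true) - Real.log (ρ i false)) * bval true = Real.log (ρ i true) := by
            simp [bval]
          rw [h2, Real.exp_log (hρ i hi true)]
      exact hmain.symm
    · rw [if_neg hv, if_neg hv]
  rw [heq]
  exact admB n I u _ _
/-- The unnormalized visible measure of an RBM. -/
noncomputable def nfun (n m : ℕ) (W : Matrix (Fin m) (Fin n) ℝ) (C : Fin m → ℝ)
    (B : Fin n → ℝ) : (Fin n → Bool) → ℝ := fun v =>
  ∑ h : Fin m → Bool,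
      Real.exp ((∑ j, ∑ i, bval (h j) * W j i * bval (v i)) +
        (∑ j, C j * bval (h j)) + (∑ i, B i * bval (v i)))

lemma nfun_pos (n m : ℕ) (W : Matrix (Fin m) (Fin n) ℝ) (C : Fin m → ℝ)
    (B : Fin n → ℝ) (v : Fin n → Bool) : 0 < nfun n m W C B v :=
  Finset.sum_pos (fun _ _ => Real.exp_pos _) Finset.univ_nonempty

lemma rbmDist_eq_nfun (n m : ℕ) (W : Matrix (Fin m) (Fin n) ℝ) (C : Fin m → ℝ)
    (B : Fin n → ℝ) :
    rbmDist n m W C B = fun v => nfun n m W C B v / ∑ v', nfun n m W C B v' := rfl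

lemma nfun_cons (n m : ℕ) (W : Matrix (Fin m) (Fin n) ℝ) (C : Fin m → ℝ) (B : Fin n → ℝ)
    (w : Fin n → ℝ) (c : ℝ) (v : Fin n → Bool) :
    nfun n (m + 1) (Matrix.of (Fin.cons w W)) (Fin.cons c C) B v
      = nfun n m W C B v * (1 + Real.exp (c + ∑ i, w i * bval (v i))) := by
  classical
  obtain ⟨W', hW'⟩ : ∃ W' : Fin m → Fin n → ℝ, W' = W := ⟨W, rfl⟩
  subst hW'
  unfold nfun
  rw [← Equiv.sum_comp (Fin.consEquiv fun _ : Fin (m + 1) => Bool), Fintype.sum_prod_type,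
    Fintype.sum_bool]
  simp only [Fin.consEquiv_apply, Fin.sum_univ_succ, Fin.cons_zero, Fin.cons_succ, Matrix.of_apply,
    bval, if_true, Bool.false_eq_true, if_false, zero_mul, mul_zero, one_mul, mul_one,
    Finset.sum_const_zero, zero_add, add_zero]
  rw [mul_add, mul_one, add_comm]
  congr 1
  rw [Finset.sum_mul]
  exact Finset.sum_congr rfl fun h _ => by rw [← Real.exp_add]; congr 1; ring
lemma div_div_div_same (a S T : ℝ) (hT : T ≠ 0) : (a / T) / (S / T) = a / S := by
  rcases eq_or_ne S 0 with h | h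
  · simp [h]
  · field_simp

open Filter in
lemma lemA (n m : ℕ) (p : (Fin n → Bool) → ℝ) (hp : p ∈ RBM n m)
    (hpnn : ∀ v, 0 ≤ p v) (hp1 : ∑ v, p v = 1)
    (lam : (Fin n → Bool) → ℝ) (hlam : Adm n lam) :
    (fun v => p v * (1 + lam v) / ∑ v', p v' * (1 + lam v')) ∈ RBM n (m + 1) := by
  classical
  obtain ⟨cs, ws, hcw⟩ := hlam
  have hlam0 : ∀ v, 0 ≤ lam v := adm_nonneg ⟨cs, ws, hcw⟩
  have step2 : ∀ (c : ℝ) (w : Fin n → ℝ),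
      (fun v => p v * (1 + Real.exp (c + ∑ i, w i * bval (v i))) /
        ∑ v', p v' * (1 + Real.exp (c + ∑ i, w i * bval (v' i)))) ∈ RBM n (m + 1) := by
    intro c w
    obtain ⟨ps, hpsmem, hpslim⟩ := mem_closure_iff_seq_limit.mp hp
    have hrep : ∀ s, (fun v => ps s v * (1 + Real.exp (c + ∑ i, w i * bval (v i))) /
        ∑ v', ps s v' * (1 + Real.exp (c + ∑ i, w i * bval (v' i)))) ∈
        { p | ∃ (W : Matrix (Fin (m+1)) (Fin n) ℝ) (C : Fin (m+1) → ℝ) (B : Fin n → ℝ),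
          p = rbmDist n (m+1) W C B } := by
      intro s
      obtain ⟨W, C, B, hWCB⟩ := hpsmem s
      refine ⟨Matrix.of (Fin.cons w W), Fin.cons c C, B, ?_⟩
      have hT : (0:ℝ) < ∑ v', nfun n m W C B v' :=
        Finset.sum_pos (fun v _ => nfun_pos n m W C B v) Finset.univ_nonempty
      funext v
      rw [hWCB, rbmDist_eq_nfun, rbmDist_eq_nfun]
      simp only [nfun_cons, div_mul_eq_mul_div, ← Finset.sum_div]
      rw [div_div_div_same _ _ _ hT.ne']
    have hD : Tendsto (fun s => ∑ v', ps s v' * (1 + Real.exp (c + ∑ i, w i * bval (v' i))))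
        atTop (nhds (∑ v', p v' * (1 + Real.exp (c + ∑ i, w i * bval (v' i))))) :=
      tendsto_finset_sum _ fun v' _ => (tendsto_pi_nhds.mp hpslim v').mul_const _
    have hDpos : (0:ℝ) < ∑ v', p v' * (1 + Real.exp (c + ∑ i, w i * bval (v' i))) := by
      have hle : ∀ v', p v' ≤ p v' * (1 + Real.exp (c + ∑ i, w i * bval (v' i))) := fun v' => by
        nlinarith [hpnn v', Real.exp_pos (c + ∑ i, w i * bval (v' i))]
      calc (0:ℝ) < 1 := one_pos
        _ = ∑ v', p v' := hp1.symm
        _ ≤ _ := Finset.sum_le_sum fun v' _ => hle v'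
    have hconv : Tendsto (fun s => (fun v => ps s v * (1 + Real.exp (c + ∑ i, w i * bval (v i))) /
        ∑ v', ps s v' * (1 + Real.exp (c + ∑ i, w i * bval (v' i))))) atTop
        (nhds (fun v => p v * (1 + Real.exp (c + ∑ i, w i * bval (v i))) /
        ∑ v', p v' * (1 + Real.exp (c + ∑ i, w i * bval (v' i))))) :=
      tendsto_pi_nhds.mpr fun v =>
        (((tendsto_pi_nhds.mp hpslim v).mul_const _).div hD hDpos.ne')
    exact mem_closure_of_tendsto hconv (Eventually.of_forall hrep)
  -- step 3: pass to the limit in (c, w)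
  have hDlim : Tendsto (fun t => ∑ v', p v' * (1 + Real.exp (cs t + ∑ i, ws t i * bval (v' i))))
      atTop (nhds (∑ v', p v' * (1 + lam v'))) :=
    tendsto_finset_sum _ fun v' _ => (tendsto_const_nhds.add (hcw v')).const_mul _
  have hDpos : (0:ℝ) < ∑ v', p v' * (1 + lam v') := by
    have hle : ∀ v', p v' ≤ p v' * (1 + lam v') := fun v' => by
      nlinarith [hpnn v', hlam0 v']
    calc (0:ℝ) < 1 := one_pos
      _ = ∑ v', p v' := hp1.symm
      _ ≤ _ := Finset.sum_le_sum fun v' _ => hle v'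
  have hconv : Tendsto (fun t => (fun v => p v * (1 + Real.exp (cs t + ∑ i, ws t i * bval (v i))) /
      ∑ v', p v' * (1 + Real.exp (cs t + ∑ i, ws t i * bval (v' i))))) atTop
      (nhds (fun v => p v * (1 + lam v) / ∑ v', p v' * (1 + lam v'))) :=
    tendsto_pi_nhds.mpr fun v =>
      (((tendsto_const_nhds.add (hcw v)).const_mul _).div hDlim hDpos.ne')
  exact isClosed_closure.mem_of_tendsto hconv (Eventually.of_forall fun t => step2 (cs t) (ws t))
lemma base0 (n : ℕ) (c : ℝ) (hc : 0 < c) (φ : Fin n → Bool → ℝ) (hφ : ∀ i b, 0 < φ i b) :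
    (fun v => (c * ∏ i, φ i (v i)) / ∑ v' : Fin n → Bool, c * ∏ i, φ i (v' i)) ∈ RBM n 0 := by
  classical
  set B : Fin n → ℝ := fun i => Real.log (φ i true) - Real.log (φ i false) with hB
  set κ : ℝ := c * ∏ i, φ i false with hκ
  have hκpos : 0 < κ := mul_pos hc (Finset.prod_pos fun i _ => hφ i false)
  have hfac : ∀ v : Fin n → Bool,
      c * ∏ i, φ i (v i) = κ * Real.exp (∑ i, B i * bval (v i)) := by
    intro v
    rw [hκ, Real.exp_sum, mul_assoc, ← Finset.prod_mul_distrib]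
    congr 1
    refine Finset.prod_congr rfl fun i _ => ?_
    cases hvi : v i
    · simp [bval]
    · rw [show B i * bval true = Real.log (φ i true) - Real.log (φ i false) by
        simp [hB, bval],
        Real.exp_sub, Real.exp_log (hφ i true), Real.exp_log (hφ i false)]
      rw [mul_comm, div_mul_cancel₀ _ (hφ i false).ne']
  have hrb : (fun v => (c * ∏ i, φ i (v i)) / ∑ v' : Fin n → Bool, c * ∏ i, φ i (v' i))
      = rbmDist n 0 (Matrix.of fun j _ => (0:ℝ)) (fun _ => 0) B := by
    funext v
    simp only [hfac, ← Finset.mul_sum, mul_div_mul_left _ _ hκpos.ne']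
    simp [rbmDist]
  rw [hrb]
  exact subset_closure ⟨_, _, _, rfl⟩

lemma indStep (n m0 N : ℕ) (base : (Fin n → Bool) → ℝ) (comp : Fin N → (Fin n → Bool) → ℝ)
    (hbpos : ∀ v, 0 < base v)
    (hbase : (fun v => base v / ∑ v', base v') ∈ RBM n m0)
    (hcomp : ∀ j v, 0 ≤ comp j v)
    (hadm : ∀ j : Fin N, Adm n (fun v => comp j v /
      (base v + ∑ j' : Fin N, if (j' : ℕ) < (j : ℕ) then comp j' v else 0))) :
    (fun v => (base v + ∑ j, comp j v) / ∑ v', (base v' + ∑ j, comp j v'))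
      ∈ RBM n (m0 + N) := by
  classical
  set SS : ℕ → (Fin n → Bool) → ℝ :=
    fun L v => base v + ∑ j' : Fin N, if (j' : ℕ) < L then comp j' v else 0 with hSS
  have hSSpos : ∀ L v, 0 < SS L v := by
    intro L v
    simp only [hSS]
    refine add_pos_of_pos_of_nonneg (hbpos v) (Finset.sum_nonneg fun j _ => ?_)
    by_cases h : (j : ℕ) < L
    · rw [if_pos h]; exact hcomp j v
    · rw [if_neg h]
  have hTpos : ∀ L, 0 < ∑ v, SS L v := fun L =>
    Finset.sum_pos (fun v _ => hSSpos L v) Finset.univ_nonempty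
  have key : ∀ L, L ≤ N → (fun v => SS L v / ∑ v', SS L v') ∈ RBM n (m0 + L) := by
    intro L
    induction L with
    | zero => intro _; simpa [hSS] using hbase
    | succ L ih =>
      intro hL1
      have hL : L ≤ N := Nat.le_of_succ_le hL1
      set j0 : Fin N := ⟨L, hL1⟩ with hj0
      have hstep : ∀ v, SS (L+1) v = SS L v + comp j0 v := by
        intro v
        have hper : ∀ j' : Fin N, (if (j' : ℕ) < L + 1 then comp j' v else 0)
            = (if (j' : ℕ) < L then comp j' v else 0)
              + (if (j' : ℕ) = L then comp j' v else 0) := by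
          intro j'
          by_cases h3 : (j' : ℕ) = L
          · rw [if_pos (show (j':ℕ) < L + 1 by omega), if_neg (by omega), if_pos h3]
            ring
          · by_cases h2 : (j' : ℕ) < L
            · rw [if_pos (by omega), if_pos h2, if_neg h3, add_zero]
            · rw [if_neg (by omega), if_neg h2, if_neg h3, add_zero]
        have hsum : ∑ j' : Fin N, (if (j' : ℕ) = L then comp j' v else 0) = comp j0 v := by
          rw [Finset.sum_eq_single j0 (fun b _ hb => if_neg fun h => hb (Fin.ext h))
            (fun h => absurd (Finset.mem_univ j0) h)]
          exact if_pos rfl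
        simp only [hSS]
        rw [Finset.sum_congr rfl fun j' _ => hper j', Finset.sum_add_distrib, hsum]
        ring
      have hnn : ∀ v, 0 ≤ SS L v / ∑ v', SS L v' := fun v =>
        div_nonneg (hSSpos L v).le (hTpos L).le
      have h1 : ∑ v, SS L v / ∑ v', SS L v' = 1 := by
        rw [← Finset.sum_div, div_self (hTpos L).ne']
      have hadm' : Adm n (fun v => comp j0 v / SS L v) := by
        simpa only [hSS] using hadm j0
      have hmem := lemA n (m0 + L) _ (ih hL) hnn h1 _ hadm'
      have hmul : ∀ v, (SS L v / ∑ v', SS L v') * (1 + comp j0 v / SS L v)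
          = SS (L+1) v / ∑ v', SS L v' := by
        intro v
        rw [hstep v]
        have h2 := (hSSpos L v).ne'
        have h3 := (hTpos L).ne'
        field_simp
      have hfun : (fun v => (SS L v / ∑ v', SS L v') * (1 + comp j0 v / SS L v) /
          ∑ v', (SS L v' / ∑ v'', SS L v'') * (1 + comp j0 v' / SS L v'))
          = fun v => SS (L+1) v / ∑ v', SS (L+1) v' := by
        funext v
        simp only [hmul]
        rw [← Finset.sum_div, div_div_div_same _ _ _ (hTpos L).ne']
      rw [hfun] at hmem
      exact hmem
  have hfin := key N le_rfl
  have hSSN : ∀ v, SS N v = base v + ∑ j, comp j v := fun v => by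
    simp only [hSS]
    congr 1
    exact Finset.sum_congr rfl fun j _ => if_pos j.isLt
  simpa only [hSSN] using hfin
/-- Perturbed base product measure. -/
noncomputable def pbase (n : ℕ) (a ε : ℝ) (f : Fin n → Bool → ℝ) : (Fin n → Bool) → ℝ :=
  fun v => (a + ε) * ∏ i, (f i (v i) + ε)

/-- Perturbed product measure on a face. -/
noncomputable def pface (n : ℕ) (a ε : ℝ) (I : Finset (Fin n)) (g : Fin n → Bool → ℝ) :
    (Fin n → Bool) → ℝ :=
  fun v => (a + ε) * ∏ i, (if i ∈ I then g i (v i) + ε else g i (v i))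

/-- Perturbed measure on an edge. -/
noncomputable def pedge (n : ℕ) (b ε : ℝ) (x y : Fin n → Bool) (rx ry : ℝ) :
    (Fin n → Bool) → ℝ :=
  fun v => (b + ε) * (if v = x then rx + ε else if v = y then ry + ε else 0)

open Filter

lemma tendsto_pbase (n : ℕ) (a : ℝ) (f : Fin n → Bool → ℝ) (eps : ℕ → ℝ)
    (h : Tendsto eps atTop (nhds 0)) (v : Fin n → Bool) :
    Tendsto (fun t => pbase n a (eps t) f v) atTop (nhds (a * ∏ i, f i (v i))) := by
  have h1 : Tendsto (fun t => a + eps t) atTop (nhds a) := by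
    simpa using tendsto_const_nhds.add h
  have h2 : ∀ i : Fin n, Tendsto (fun t => f i (v i) + eps t) atTop (nhds (f i (v i))) :=
    fun i => by simpa using tendsto_const_nhds.add h
  exact h1.mul (tendsto_finset_prod Finset.univ fun i _ => h2 i)

lemma tendsto_pface (n : ℕ) (a : ℝ) (I : Finset (Fin n)) (g : Fin n → Bool → ℝ) (eps : ℕ → ℝ)
    (h : Tendsto eps atTop (nhds 0)) (v : Fin n → Bool) :
    Tendsto (fun t => pface n a (eps t) I g v) atTop (nhds (a * ∏ i, g i (v i))) := by
  have h1 : Tendsto (fun t => a + eps t) atTop (nhds a) := by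
    simpa using tendsto_const_nhds.add h
  have h2 : ∀ i : Fin n, Tendsto (fun t => if i ∈ I then g i (v i) + eps t else g i (v i))
      atTop (nhds (g i (v i))) := by
    intro i
    by_cases hi : i ∈ I
    · simp only [if_pos hi]
      simpa using tendsto_const_nhds.add h
    · simp only [if_neg hi]
      exact tendsto_const_nhds
  exact h1.mul (tendsto_finset_prod Finset.univ fun i _ => h2 i)

lemma tendsto_pedge (n : ℕ) (b : ℝ) (x y v : Fin n → Bool) (rx ry : ℝ) (eps : ℕ → ℝ)
    (h : Tendsto eps atTop (nhds 0)) :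
    Tendsto (fun t => pedge n b (eps t) x y rx ry v) atTop
      (nhds (b * (if v = x then rx else if v = y then ry else 0))) := by
  have h2 : Tendsto (fun t => if v = x then rx + eps t else if v = y then ry + eps t else 0)
      atTop (nhds (if v = x then rx else if v = y then ry else 0)) := by
    by_cases h1 : v = x
    · simp only [if_pos h1]; simpa using tendsto_const_nhds.add h
    · simp only [if_neg h1]
      by_cases h2 : v = y
      · simp only [if_pos h2]; simpa using tendsto_const_nhds.add h
      · simp only [if_neg h2]; exact tendsto_const_nhds
  have h1 : Tendsto (fun t => b + eps t) atTop (nhds b) := by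
    simpa using tendsto_const_nhds.add h
  simpa [pedge, mul_ite] using h1.mul h2

lemma bool_ne_iff' {a b : Bool} (h : a ≠ b) : a = !b := by
  cases a <;> cases b <;> simp_all

set_option maxHeartbeats 1000000
open Filter

/-- For `0 ≤ k ≤ m`, any mixture of one arbitrary product distribution `p₀`,
`m-k` product distributions supported on pairwise disjoint faces of the `n`-cube, and
`k` arbitrary distributions supported on edges of the `n`-cube, belongs to `RBM_{n,m}`. -/
theorem mixture_mem_rbm (n m k : ℕ) (hk : k ≤ m)
    (p0 : (Fin n → Bool) → ℝ) (hp0 : IsProb p0) (hp0prod : IsProductDist p0)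
    (F : Fin (m - k) → Set (Fin n → Bool)) (hF : ∀ j, IsFace (F j))
    (hFdisj : ∀ j j', j ≠ j' → Disjoint (F j) (F j'))
    (q : Fin (m - k) → (Fin n → Bool) → ℝ)
    (hq : ∀ j, IsProb (q j) ∧ IsProductDist (q j) ∧ ∀ x, x ∉ F j → q j x = 0)
    (E : Fin k → Set (Fin n → Bool)) (hE : ∀ l, IsEdge (E l))
    (r : Fin k → (Fin n → Bool) → ℝ)
    (hr : ∀ l, IsProb (r l) ∧ ∀ x, x ∉ E l → r l x = 0)
    (α0 : ℝ) (α : Fin (m - k) → ℝ) (β : Fin k → ℝ)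
    (hα0 : 0 ≤ α0) (hα : ∀ j, 0 ≤ α j) (hβ : ∀ l, 0 ≤ β l)
    (hsum : α0 + ∑ j, α j + ∑ l, β l = 1) :
    (fun v => α0 * p0 v + ∑ j, α j * q j v + ∑ l, β l * r l v) ∈ RBM n m := by
  classical
  obtain ⟨f, hf, hfp⟩ := hp0prod
  choose I u hFeq using hF
  have hqprod : ∀ j, ∃ g : Fin n → Bool → ℝ,
      (∀ i, IsProb (g i)) ∧ ∀ v, q j v = ∏ i, g i (v i) := fun j => (hq j).2.1
  choose g hg hgq using hqprod
  choose x ie hEeq using hE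
  set y : Fin k → (Fin n → Bool) :=
    fun l => Function.update (x l) (ie l) (!(x l (ie l))) with hy
  -- derived support facts for the q's
  have hgsum : ∀ j i, g j i true + g j i false = 1 := by
    intro j i
    have := (hg j i).2
    rwa [Fintype.sum_bool] at this
  have hgz : ∀ j i, i ∉ I j → g j i (!(u j i)) = 0 := by
    intro j i hi
    by_contra hne
    have hpos : 0 < g j i (!(u j i)) := lt_of_le_of_ne ((hg j i).1 _) (Ne.symm hne)
    set v : Fin n → Bool := fun i' =>
      if i' = i then !(u j i) else (if 0 < g j i' true then true else false) with hv
    have hqpos : 0 < q j v := by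
      rw [hgq j v]
      refine Finset.prod_pos fun i' _ => ?_
      by_cases hii : i' = i
      · subst hii; simp only [hv, if_pos rfl]; exact hpos
      · simp only [hv, if_neg hii]
        by_cases hgt : 0 < g j i' true
        · simpa [hgt] using hgt
        · have h0 : g j i' true = 0 :=
            le_antisymm (not_lt.mp hgt) ((hg j i').1 true)
          have h1 : g j i' false = 1 := by have := hgsum j i'; linarith
          simp [hgt, h1]
    have hvnF : v ∉ F j := by
      rw [hFeq j]
      intro hmem
      have := hmem i hi
      simp only [hv, if_pos rfl] at this
      exact (Bool.not_ne_self (u j i)) this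
    rw [(hq j).2.2 v hvnF] at hqpos
    exact lt_irrefl 0 hqpos
  have hg1 : ∀ j i, i ∉ I j → g j i (u j i) = 1 := by
    intro j i hi
    have h0 := hgz j i hi
    have h1 := hgsum j i
    cases hui : u j i <;> rw [hui] at h0 <;> simp at h0 <;> linarith
  -- derived facts for the edges
  have hyne : ∀ l, x l ≠ y l := by
    intro l h
    have := congrFun h (ie l)
    rw [hy] at this
    simp only [Function.update_self] at this
    exact (Bool.self_ne_not (x l (ie l))) this
  have hExy : ∀ l, E l = {x l, y l} := fun l => hEeq l
  have hrsum : ∀ l, r l (x l) + r l (y l) = 1 := by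
    intro l
    have h1 := (hr l).1.2
    have hz : ∀ v ∈ Finset.univ, v ∉ ({x l, y l} : Finset (Fin n → Bool)) → r l v = 0 := by
      intro v _ hv
      refine (hr l).2 v ?_
      rw [hExy l]
      simpa using hv
    rw [← Finset.sum_subset (Finset.subset_univ _) hz, Finset.sum_pair (hyne l)] at h1
    exact h1
  -- the perturbation parameter
  set eps : ℕ → ℝ := fun t => 1 / ((t : ℝ) + 1) with heps
  have hεlim : Tendsto eps atTop (nhds 0) := by
    rw [heps]; exact tendsto_one_div_add_atTop_nhds_zero_nat
  have hεpos : ∀ t, 0 < eps t := by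
    intro t; simp only [heps]; positivity
  -- Claim 1: each perturbed normalized mixture is in the model
  have claim1 : ∀ t : ℕ,
      (fun v => (pbase n α0 (eps t) f v + ∑ j, pface n (α j) (eps t) (I j) (g j) v
          + ∑ l, pedge n (β l) (eps t) (x l) (y l) (r l (x l)) (r l (y l)) v)
        / ∑ v' : Fin n → Bool, (pbase n α0 (eps t) f v'
          + ∑ j, pface n (α j) (eps t) (I j) (g j) v'
          + ∑ l, pedge n (β l) (eps t) (x l) (y l) (r l (x l)) (r l (y l)) v'))
        ∈ RBM n m := by
    intro t
    set ε := eps t with hεdef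
    have hε0 : 0 < ε := hεpos t
    have hfε : ∀ i b, 0 < f i b + ε := fun i b => add_pos_of_nonneg_of_pos ((hf i).1 b) hε0
    have hbpos : ∀ v, 0 < pbase n α0 ε f v := fun v =>
      mul_pos (add_pos_of_nonneg_of_pos hα0 hε0) (Finset.prod_pos fun i _ => hfε i (v i))
    have hgnn : ∀ j i b, 0 ≤ g j i b := fun j i b => (hg j i).1 b
    have hcFnn : ∀ (j : Fin (m-k)) v, 0 ≤ pface n (α j) ε (I j) (g j) v := by
      intro j v
      unfold pface
      refine mul_nonneg (add_nonneg (hα j) hε0.le) (Finset.prod_nonneg fun i _ => ?_)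
      by_cases hi : i ∈ I j
      · rw [if_pos hi]; have := hgnn j i (v i); linarith
      · rw [if_neg hi]; exact hgnn j i (v i)
    have hcEnn : ∀ (l : Fin k) v,
        0 ≤ pedge n (β l) ε (x l) (y l) (r l (x l)) (r l (y l)) v := by
      intro l v
      unfold pedge
      refine mul_nonneg (add_nonneg (hβ l) hε0.le) ?_
      split_ifs
      · exact add_nonneg ((hr l).1.1 _) hε0.le
      · exact add_nonneg ((hr l).1.1 _) hε0.le
      · exact le_refl 0
    -- base membership
    have hbase0 : (fun v => pbase n α0 ε f v / ∑ v' : Fin n → Bool, pbase n α0 ε f v')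
        ∈ RBM n 0 :=
      base0 n (α0 + ε) (add_pos_of_nonneg_of_pos hα0 hε0) (fun i b => f i b + ε)
        (fun i b => hfε i b)
    -- admissibility of the face components
    have hadmF : ∀ j : Fin (m-k), Adm n (fun v => pface n (α j) ε (I j) (g j) v /
        (pbase n α0 ε f v + ∑ j' : Fin (m-k),
          if (j' : ℕ) < (j : ℕ) then pface n (α j') ε (I j') (g j') v else 0)) := by
      intro j
      have hcomp0 : ∀ v, (∀ i ∉ I j, v i = u j i) → ∀ j', j' ≠ j →
          pface n (α j') ε (I j') (g j') v = 0 := by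
        intro v hv j' hne
        have hvF : v ∈ F j := by rw [hFeq j]; exact hv
        have hvnF : v ∉ F j' := fun hmem => Set.disjoint_left.mp (hFdisj j' j hne) hmem hvF
        rw [hFeq j'] at hvnF
        simp only [Set.mem_setOf_eq] at hvnF
        push_neg at hvnF
        obtain ⟨i1, hi1, hne1⟩ := hvnF
        have hvi1 : v i1 = !(u j' i1) := bool_ne_iff' hne1
        unfold pface
        rw [Finset.prod_eq_zero (Finset.mem_univ i1)
          (by rw [if_neg hi1, hvi1]; exact hgz j' i1 hi1), mul_zero]
      have hfun : (fun v => pface n (α j) ε (I j) (g j) v /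
          (pbase n α0 ε f v + ∑ j' : Fin (m-k),
            if (j' : ℕ) < (j : ℕ) then pface n (α j') ε (I j') (g j') v else 0))
          = fun v => if ∀ i ∉ I j, v i = u j i then
              ((α j + ε) / ((α0 + ε) * ∏ i ∈ (I j)ᶜ, (f i (u j i) + ε))) *
                ∏ i ∈ I j, ((g j i (v i) + ε) / (f i (v i) + ε)) else 0 := by
        funext v
        by_cases hv : ∀ i ∉ I j, v i = u j i
        · rw [if_pos hv]
          have hzero : ∑ j' : Fin (m-k), (if (j' : ℕ) < (j : ℕ)
              then pface n (α j') ε (I j') (g j') v else 0) = 0 := by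
            refine Finset.sum_eq_zero fun j' _ => ?_
            by_cases hlt : (j' : ℕ) < (j : ℕ)
            · rw [if_pos hlt]
              exact hcomp0 v hv j' (fun h => by rw [h] at hlt; exact lt_irrefl _ hlt)
            · rw [if_neg hlt]
          rw [hzero, add_zero]
          unfold pface pbase
          have h1 : ∏ i ∈ I j, (if i ∈ I j then g j i (v i) + ε else g j i (v i))
              = ∏ i ∈ I j, (g j i (v i) + ε) :=
            Finset.prod_congr rfl fun i hi => if_pos hi
          have h2 : ∏ i ∈ (I j)ᶜ, (if i ∈ I j then g j i (v i) + ε else g j i (v i)) = 1 :=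
            Finset.prod_eq_one fun i hi => by
              have hni := Finset.mem_compl.mp hi
              rw [if_neg hni, hv i hni]; exact hg1 j i hni
          have hGsplit : (∏ i, (if i ∈ I j then g j i (v i) + ε else g j i (v i)))
              = ∏ i ∈ I j, (g j i (v i) + ε) := by
            rw [← Finset.prod_mul_prod_compl (I j), h1, h2, mul_one]
          have hFsplit : (∏ i, (f i (v i) + ε))
              = (∏ i ∈ I j, (f i (v i) + ε)) * ∏ i ∈ (I j)ᶜ, (f i (u j i) + ε) := by
            rw [← Finset.prod_mul_prod_compl (I j)]
            congr 1
            exact Finset.prod_congr rfl fun i hi => by rw [hv i (Finset.mem_compl.mp hi)]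
          rw [hGsplit, hFsplit, Finset.prod_div_distrib, div_mul_div_comm]
          ring
        · rw [if_neg hv]
          push_neg at hv
          obtain ⟨i1, hi1, hne1⟩ := hv
          have hvi1 : v i1 = !(u j i1) := bool_ne_iff' hne1
          have hz : pface n (α j) ε (I j) (g j) v = 0 := by
            unfold pface
            rw [Finset.prod_eq_zero (Finset.mem_univ i1)
              (by rw [if_neg hi1, hvi1]; exact hgz j i1 hi1), mul_zero]
          rw [hz, zero_div]
      rw [hfun]
      refine admC n (I j) (u j)
        ((α j + ε) / ((α0 + ε) * ∏ i ∈ (I j)ᶜ, (f i (u j i) + ε))) ?_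
        (fun i b => (g j i b + ε) / (f i b + ε)) ?_
      · exact div_pos (add_pos_of_nonneg_of_pos (hα j) hε0)
          (mul_pos (add_pos_of_nonneg_of_pos hα0 hε0) (Finset.prod_pos fun i _ => hfε i _))
      · intro i hi b
        exact div_pos (add_pos_of_nonneg_of_pos (hgnn j i b) hε0) (hfε i b)
    have hFaceMem := indStep n 0 (m-k) (pbase n α0 ε f)
      (fun j => pface n (α j) ε (I j) (g j)) hbpos hbase0 hcFnn hadmF
    rw [Nat.zero_add] at hFaceMem
    -- edges
    have hmixFpos : ∀ v, 0 < pbase n α0 ε f v + ∑ j, pface n (α j) ε (I j) (g j) v :=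
      fun v => add_pos_of_pos_of_nonneg (hbpos v) (Finset.sum_nonneg fun j _ => hcFnn j v)
    have hadmE : ∀ l : Fin k, Adm n
        (fun v => pedge n (β l) ε (x l) (y l) (r l (x l)) (r l (y l)) v /
          ((pbase n α0 ε f v + ∑ j, pface n (α j) ε (I j) (g j) v) + ∑ l' : Fin k,
            if (l' : ℕ) < (l : ℕ)
            then pedge n (β l') ε (x l') (y l') (r l' (x l')) (r l' (y l')) v else 0)) := by
      intro l
      set D : (Fin n → Bool) → ℝ := fun v =>
        (pbase n α0 ε f v + ∑ j, pface n (α j) ε (I j) (g j) v) + ∑ l' : Fin k,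
          if (l' : ℕ) < (l : ℕ)
          then pedge n (β l') ε (x l') (y l') (r l' (x l')) (r l' (y l')) v else 0 with hD
      have hDpos : ∀ v, 0 < D v := by
        intro v
        simp only [hD]
        refine add_pos_of_pos_of_nonneg (hmixFpos v) (Finset.sum_nonneg fun l' _ => ?_)
        split_ifs
        · exact hcEnn l' v
        · exact le_refl 0
      set P : Bool → (Fin n → Bool) := fun b => Function.update (x l) (ie l) b with hP
      set θ : Bool → ℝ :=
        fun b => pedge n (β l) ε (x l) (y l) (r l (x l)) (r l (y l)) (P b) / D (P b) with hθ
      have hPfx : P (x l (ie l)) = x l := by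
        simp only [hP]; exact Function.update_eq_self _ _
      have hPfy : P (!(x l (ie l))) = y l := by simp only [hP, hy]
      have hθpos : ∀ b, 0 < θ b := by
        intro b
        simp only [hθ]
        refine div_pos ?_ (hDpos _)
        unfold pedge
        refine mul_pos (add_pos_of_nonneg_of_pos (hβ l) hε0) ?_
        by_cases hb : b = x l (ie l)
        · have hPb : P b = x l := by rw [hb]; exact hPfx
          rw [hPb, if_pos rfl]
          exact add_pos_of_nonneg_of_pos ((hr l).1.1 _) hε0
        · have hbnot : b = !(x l (ie l)) := bool_ne_iff' hb
          have hPb : P b = y l := by rw [hbnot, hPfy]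
          rw [hPb, if_neg (Ne.symm (hyne l)), if_pos rfl]
          exact add_pos_of_nonneg_of_pos ((hr l).1.1 _) hε0
      have hfun : (fun v => pedge n (β l) ε (x l) (y l) (r l (x l)) (r l (y l)) v / D v)
          = fun v => if ∀ i ∉ ({ie l} : Finset (Fin n)), v i = x l i then
              θ false * ∏ i ∈ ({ie l} : Finset (Fin n)),
                (if v i then θ true / θ false else 1) else 0 := by
        funext v
        by_cases hv : ∀ i ∉ ({ie l} : Finset (Fin n)), v i = x l i
        · rw [if_pos hv, Finset.prod_singleton]
          have hvP : v = P (v (ie l)) := by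
            funext i
            by_cases hi : i = ie l
            · subst hi
              simp only [hP, Function.update_self]
            · simp only [hP]
              rw [Function.update_of_ne hi]
              exact hv i (Finset.notMem_singleton.mpr hi)
          cases hb : v (ie l)
          · rw [if_neg Bool.false_ne_true, mul_one]
            conv_lhs => rw [hvP, hb]
          · rw [if_pos rfl, mul_comm, div_mul_cancel₀ _ (hθpos false).ne']
            conv_lhs => rw [hvP, hb]
        · rw [if_neg hv]
          push_neg at hv
          obtain ⟨i1, hi1, hne1⟩ := hv
          have hi1' : i1 ≠ ie l := by simpa using hi1
          have hvx : v ≠ x l := fun h => hne1 (by rw [h])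
          have hvy : v ≠ y l := by
            intro h
            have hyx : y l i1 = x l i1 := by
              simp only [hy]
              exact Function.update_of_ne hi1' _ _
            rw [h, hyx] at hne1
            exact hne1 rfl
          have hzero : pedge n (β l) ε (x l) (y l) (r l (x l)) (r l (y l)) v = 0 := by
            unfold pedge
            rw [if_neg hvx, if_neg hvy, mul_zero]
          rw [hzero, zero_div]
      rw [hfun]
      refine admC n {ie l} (x l) (θ false) (hθpos false)
        (fun _ b => if b then θ true / θ false else 1) ?_
      intro i hi b
      cases b
      · simpa using one_pos
      · simpa using div_pos (hθpos true) (hθpos false)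
    have hEdgeMem := indStep n (m-k) k
      (fun v => pbase n α0 ε f v + ∑ j, pface n (α j) ε (I j) (g j) v)
      (fun l => pedge n (β l) ε (x l) (y l) (r l (x l)) (r l (y l)))
      hmixFpos hFaceMem hcEnn hadmE
    rw [Nat.sub_add_cancel hk] at hEdgeMem
    exact hEdgeMem
  -- Claim 2: pointwise convergence of the perturbed mixtures to the target
  have htgt : ∀ v, Tendsto (fun t => pbase n α0 (eps t) f v
      + ∑ j, pface n (α j) (eps t) (I j) (g j) v
      + ∑ l, pedge n (β l) (eps t) (x l) (y l) (r l (x l)) (r l (y l)) v) atTop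
      (nhds (α0 * p0 v + ∑ j, α j * q j v + ∑ l, β l * r l v)) := by
    intro v
    have h1 := tendsto_pbase n α0 f eps hεlim v
    have h2 : ∀ j : Fin (m-k), Tendsto (fun t => pface n (α j) (eps t) (I j) (g j) v)
        atTop (nhds (α j * ∏ i, g j i (v i))) :=
      fun j => tendsto_pface n (α j) (I j) (g j) eps hεlim v
    have h3 : ∀ l : Fin k, Tendsto
        (fun t => pedge n (β l) (eps t) (x l) (y l) (r l (x l)) (r l (y l)) v) atTop
        (nhds (β l * (if v = x l then r l (x l) else if v = y l then r l (y l) else 0))) :=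
      fun l => tendsto_pedge n (β l) (x l) (y l) v (r l (x l)) (r l (y l)) eps hεlim
    have hcomb := (h1.add (tendsto_finset_sum Finset.univ fun j _ => h2 j)).add
      (tendsto_finset_sum Finset.univ fun l _ => h3 l)
    have heq : (α0 * ∏ i, f i (v i)) + (∑ j, α j * ∏ i, g j i (v i))
        + (∑ l, β l * (if v = x l then r l (x l) else if v = y l then r l (y l) else 0))
        = α0 * p0 v + ∑ j, α j * q j v + ∑ l, β l * r l v := by
      have hB : ∑ j : Fin (m-k), α j * ∏ i, g j i (v i) = ∑ j, α j * q j v :=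
        Finset.sum_congr rfl fun j _ => by rw [hgq j v]
      have hC : ∑ l : Fin k, β l *
          (if v = x l then r l (x l) else if v = y l then r l (y l) else 0)
          = ∑ l, β l * r l v := by
        refine Finset.sum_congr rfl fun l _ => ?_
        congr 1
        by_cases hx : v = x l
        · rw [if_pos hx, hx]
        · rw [if_neg hx]
          by_cases hyv : v = y l
          · rw [if_pos hyv, hyv]
          · rw [if_neg hyv]
            exact ((hr l).2 v (by rw [hExy l]; simp [hx, hyv])).symm
      rw [hB, hC, hfp v]
    rw [← heq]
    exact hcomb
  have hsumlim : Tendsto (fun t => ∑ v' : Fin n → Bool, (pbase n α0 (eps t) f v'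
      + ∑ j, pface n (α j) (eps t) (I j) (g j) v'
      + ∑ l, pedge n (β l) (eps t) (x l) (y l) (r l (x l)) (r l (y l)) v')) atTop
      (nhds 1) := by
    have hconv := tendsto_finset_sum Finset.univ fun (v : Fin n → Bool) _ => htgt v
    have hS : ∑ v : Fin n → Bool, (α0 * p0 v + ∑ j, α j * q j v + ∑ l, β l * r l v) = 1 := by
      have hsplit : ∑ v : Fin n → Bool, (α0 * p0 v + ∑ j, α j * q j v + ∑ l, β l * r l v)
          = (∑ v : Fin n → Bool, α0 * p0 v)
            + (∑ v : Fin n → Bool, ∑ j : Fin (m-k), α j * q j v)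
            + (∑ v : Fin n → Bool, ∑ l : Fin k, β l * r l v) := by
        rw [Finset.sum_add_distrib, Finset.sum_add_distrib]
      have e2 : ∑ v : Fin n → Bool, ∑ j : Fin (m-k), α j * q j v = ∑ j : Fin (m-k), α j := by
        rw [Finset.sum_comm]
        exact Finset.sum_congr rfl fun j _ => by rw [← Finset.mul_sum, (hq j).1.2, mul_one]
      have e3 : ∑ v : Fin n → Bool, ∑ l : Fin k, β l * r l v = ∑ l : Fin k, β l := by
        rw [Finset.sum_comm]
        exact Finset.sum_congr rfl fun l _ => by rw [← Finset.mul_sum, (hr l).1.2, mul_one]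
      rw [hsplit, ← Finset.mul_sum, hp0.2, mul_one, e2, e3]
      exact hsum
    rw [hS] at hconv
    exact hconv
  have hfinal : Tendsto (fun t => (fun v => (pbase n α0 (eps t) f v
      + ∑ j, pface n (α j) (eps t) (I j) (g j) v
      + ∑ l, pedge n (β l) (eps t) (x l) (y l) (r l (x l)) (r l (y l)) v)
      / ∑ v' : Fin n → Bool, (pbase n α0 (eps t) f v'
      + ∑ j, pface n (α j) (eps t) (I j) (g j) v'
      + ∑ l, pedge n (β l) (eps t) (x l) (y l) (r l (x l)) (r l (y l)) v'))) atTop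
      (nhds (fun v => α0 * p0 v + ∑ j, α j * q j v + ∑ l, β l * r l v)) :=
    tendsto_pi_nhds.mpr fun v => by
      have h := (htgt v).div hsumlim one_ne_zero
      rw [div_one] at h
      exact h
  exact isClosed_closure.mem_of_tendsto hfinal (Eventually.of_forall claim1)
end
end

section
/- Let F₁, …, F_{m+1} be pairwise disjoint faces (cubical subsets) of the n-cube, and for each i let p_i be a product distribution supported on F_i. Then every convex combination p = Σ_{i=1}^{m+1} α_i p_i (α_i ≥ 0, Σ_i α_i = 1) belongs to RBM_{n,m}. In other words, RBM_{n,m} contains any mixture of m+1 product distributions with disjoint cubical supports. -/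
open scoped BigOperators

noncomputable section

namespace RBMAux

open Filter Finset Real

def gnf {n : ℕ} (I : Finset (Fin n)) (u : Fin n → Bool) (g : Fin n → Bool → ℝ)
    (k : Fin n) (b : Bool) : ℝ :=
  if k ∈ I then g k b else if b = u k then 1 else 0

def mis {n : ℕ} (I : Finset (Fin n)) (u : Fin n → Bool) (v : Fin n → Bool) : ℕ :=
  (Iᶜ.filter fun k => v k ≠ u k).card

lemma mis_eq_zero {n : ℕ} {I : Finset (Fin n)} {u v : Fin n → Bool} :
    mis I u v = 0 ↔ ∀ k ∉ I, v k = u k := by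
  simp [mis, Finset.card_eq_zero, Finset.filter_eq_empty_iff, Finset.mem_compl, not_not]

lemma mis_le {n : ℕ} (I : Finset (Fin n)) (u v : Fin n → Bool) : mis I u v ≤ n := by
  refine le_trans (Finset.card_le_univ _) ?_
  simp

lemma prod_gnf {n : ℕ} (I : Finset (Fin n)) (u : Fin n → Bool) (g : Fin n → Bool → ℝ)
    (v : Fin n → Bool) :
    (∏ k, gnf I u g k (v k)) =
      if mis I u v = 0 then ∏ k ∈ I, g k (v k) else 0 := by
  by_cases h : mis I u v = 0
  · rw [if_pos h]
    rw [mis_eq_zero] at h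
    have hc : ∀ k : Fin n, gnf I u g k (v k) = if k ∈ I then g k (v k) else 1 := by
      intro k
      by_cases hk : k ∈ I
      · simp [gnf, hk]
      · simp [gnf, hk, h k hk]
    rw [Finset.prod_congr rfl fun k _ => hc k, Finset.prod_ite_mem, Finset.univ_inter]
  · rw [if_neg h]
    have : ∃ k, k ∉ I ∧ v k ≠ u k := by
      by_contra hc
      push_neg at hc
      exact h (mis_eq_zero.mpr hc)
    obtain ⟨k, hk, hvk⟩ := this
    refine Finset.prod_eq_zero (Finset.mem_univ k) ?_
    simp [gnf, hk, hvk]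

lemma sum_prod_gnf {n : ℕ} (I : Finset (Fin n)) (u : Fin n → Bool) (g : Fin n → Bool → ℝ)
    (hg : ∀ k ∈ I, g k false + g k true = 1) :
    ∑ v : Fin n → Bool, ∏ k, gnf I u g k (v k) = 1 := by
  rw [← Fintype.piFinset_univ, ← Finset.prod_univ_sum]
  have hc : ∀ k : Fin n, ∑ b : Bool, gnf I u g k b = 1 := by
    intro k
    rw [Fintype.sum_bool]
    by_cases hk : k ∈ I
    · simpa [gnf, hk, add_comm] using hg k hk
    · cases hu : u k <;> simp [gnf, hk, hu]
  rw [Finset.prod_congr rfl fun k _ => hc k, Finset.prod_const_one]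

section Core

variable (n m : ℕ) (I : Fin (m + 1) → Finset (Fin n)) (u : Fin (m + 1) → Fin n → Bool)
  (g : Fin (m + 1) → Fin n → Bool → ℝ) (α : Fin (m + 1) → ℝ)

/-- Penalty scale for face `i`. -/
def pen (i : Fin (m + 1)) : ℝ := if i = Fin.last m then 1 else (n * m + 1 : ℝ)

lemma pen_pos (i : Fin (m + 1)) : 0 < pen n m i := by
  unfold pen; split <;> positivity

/-- Log-factors. -/
def Lf (s : ℝ) (i : Fin (m + 1)) (k : Fin n) (b : Bool) : ℝ :=
  if k ∈ I i then Real.log (g i k b) else if b = u i k then 0 else -(s * pen n m i)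

/-- Soft product factor. -/
def qq (s : ℝ) (i : Fin (m + 1)) (v : Fin n → Bool) : ℝ :=
  Real.exp (∑ k, Lf n m I u g s i k (v k))

lemma qq_pos (s : ℝ) (i : Fin (m + 1)) (v : Fin n → Bool) : 0 < qq n m I u g s i v :=
  Real.exp_pos _

/-- Limit value. -/
def Pv (i : Fin (m + 1)) (v : Fin n → Bool) : ℝ :=
  if mis (I i) (u i) v = 0 then ∏ k ∈ I i, g i k (v k) else 0

def Bp (s : ℝ) : Fin n → ℝ := fun k =>
  Lf n m I u g s (Fin.last m) k true - Lf n m I u g s (Fin.last m) k false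

def Wp (s : ℝ) : Matrix (Fin m) (Fin n) ℝ := fun j k =>
  (Lf n m I u g s j.castSucc k true - Lf n m I u g s j.castSucc k false) - Bp n m I u g s k

def Cp (s : ℝ) : Fin m → ℝ := fun j =>
  Real.log (α j.castSucc) - Real.log (α (Fin.last m)) +
    ∑ k, (Lf n m I u g s j.castSucc k false - Lf n m I u g s (Fin.last m) k false)

def rr (s : ℝ) (j : Fin m) (v : Fin n → Bool) : ℝ :=
  α j.castSucc * qq n m I u g s j.castSucc v /
    (α (Fin.last m) * qq n m I u g s (Fin.last m) v)

def MM (s : ℝ) (v : Fin n → Bool) : ℝ :=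
  α (Fin.last m) * qq n m I u g s (Fin.last m) v * ∏ j : Fin m, (1 + rr n m I u g α s j v)

lemma qq_formula (hgpos : ∀ i k b, k ∈ I i → 0 < g i k b) (s : ℝ) (i : Fin (m + 1))
    (v : Fin n → Bool) :
    qq n m I u g s i v =
      (∏ k ∈ I i, g i k (v k)) *
        Real.exp (-(s * pen n m i) * (mis (I i) (u i) v : ℝ)) := by
  have hsplit : ∑ k, Lf n m I u g s i k (v k)
      = (∑ k ∈ I i, Real.log (g i k (v k)))
          + (-(s * pen n m i)) * (mis (I i) (u i) v : ℝ) := by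
    unfold Lf mis
    rw [← Finset.sum_add_sum_compl (I i)]
    congr 1
    · exact Finset.sum_congr rfl fun k hk => by simp [hk]
    · have hc : ∀ k ∈ (I i)ᶜ,
          (if k ∈ I i then Real.log (g i k (v k))
            else if v k = u i k then 0 else -(s * pen n m i))
          = if v k ≠ u i k then -(s * pen n m i) else 0 := by
        intro k hk
        rw [Finset.mem_compl] at hk
        by_cases hv : v k = u i k <;> simp [hk, hv]
      rw [Finset.sum_congr rfl hc, ← Finset.sum_filter, Finset.sum_const, nsmul_eq_mul,
        mul_comm]
  unfold qq
  rw [hsplit, Real.exp_add]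
  congr 1
  rw [Real.exp_sum]
  exact Finset.prod_congr rfl fun k hk => Real.exp_log (hgpos i k (v k) hk)

set_option maxHeartbeats 1000000 in
lemma rbm_eq (hgpos : ∀ i k b, k ∈ I i → 0 < g i k b) (hα : ∀ i, 0 < α i) (s : ℝ)
    (v : Fin n → Bool) :
    rbmDist n m (Wp n m I u g s) (Cp n m I u g α s) (Bp n m I u g s) v =
      MM n m I u g α s v / ∑ v', MM n m I u g α s v' := by
  have hZ : (0:ℝ) < Real.exp (∑ k, Lf n m I u g s (Fin.last m) k false) := Real.exp_pos _
  set c : ℝ := (α (Fin.last m) * Real.exp (∑ k, Lf n m I u g s (Fin.last m) k false))⁻¹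
    with hc
  have hc0 : c ≠ 0 := by
    rw [hc]; exact inv_ne_zero (mul_pos (hα _) hZ).ne'
  have hnum : ∀ w : Fin n → Bool,
      (∑ h : Fin m → Bool,
        Real.exp ((∑ j, ∑ k, bval (h j) * Wp n m I u g s j k * bval (w k)) +
          (∑ j, Cp n m I u g α s j * bval (h j)) +
          (∑ k, Bp n m I u g s k * bval (w k))))
      = MM n m I u g α s w * c := by
    intro w
    have hBsum : (∑ k, Bp n m I u g s k * bval (w k))
        = (∑ k, Lf n m I u g s (Fin.last m) k (w k))
          - (∑ k, Lf n m I u g s (Fin.last m) k false) := by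
      rw [← Finset.sum_sub_distrib]
      refine Finset.sum_congr rfl fun k _ => ?_
      unfold Bp
      cases hwk : w k <;> simp [bval, hwk]
    have hWsum : ∀ j : Fin m, (∑ k, Wp n m I u g s j k * bval (w k))
        = ((∑ k, Lf n m I u g s j.castSucc k (w k))
            - (∑ k, Lf n m I u g s j.castSucc k false))
          - ((∑ k, Lf n m I u g s (Fin.last m) k (w k))
            - (∑ k, Lf n m I u g s (Fin.last m) k false)) := by
      intro j
      rw [← Finset.sum_sub_distrib, ← Finset.sum_sub_distrib, ← Finset.sum_sub_distrib]
      refine Finset.sum_congr rfl fun k _ => ?_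
      unfold Wp Bp
      cases hwk : w k <;> simp [bval, hwk]
    have hA : ∀ j : Fin m, (∑ k, Wp n m I u g s j k * bval (w k)) + Cp n m I u g α s j
        = Real.log (α j.castSucc * qq n m I u g s j.castSucc w)
          - Real.log (α (Fin.last m) * qq n m I u g s (Fin.last m) w) := by
      intro j
      rw [hWsum j]
      unfold Cp qq
      rw [Real.log_mul (hα _).ne' (Real.exp_pos _).ne',
        Real.log_mul (hα _).ne' (Real.exp_pos _).ne',
        Real.log_exp, Real.log_exp, Finset.sum_sub_distrib]
      ring
    have hexpA : ∀ j : Fin m,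
        Real.exp ((∑ k, Wp n m I u g s j k * bval (w k)) + Cp n m I u g α s j)
        = rr n m I u g α s j w := by
      intro j
      rw [hA j, Real.exp_sub,
        Real.exp_log (mul_pos (hα j.castSucc) (qq_pos n m I u g s j.castSucc w)),
        Real.exp_log (mul_pos (hα (Fin.last m)) (qq_pos n m I u g s (Fin.last m) w))]
      rfl
    have hh : ∀ h : Fin m → Bool,
        Real.exp ((∑ j, ∑ k, bval (h j) * Wp n m I u g s j k * bval (w k)) +
          (∑ j, Cp n m I u g α s j * bval (h j)) +
          (∑ k, Bp n m I u g s k * bval (w k)))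
        = (qq n m I u g s (Fin.last m) w * c * α (Fin.last m)) *
            ∏ j : Fin m, (if h j then rr n m I u g α s j w else 1) := by
      intro h
      have hre : (∑ j, ∑ k, bval (h j) * Wp n m I u g s j k * bval (w k)) +
          (∑ j, Cp n m I u g α s j * bval (h j))
          = ∑ j, bval (h j) *
              ((∑ k, Wp n m I u g s j k * bval (w k)) + Cp n m I u g α s j) := by
        rw [← Finset.sum_add_distrib]
        refine Finset.sum_congr rfl fun j _ => ?_
        rw [mul_add, Finset.mul_sum]
        congr 1
        · exact Finset.sum_congr rfl fun k _ => by ring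
        · ring
      rw [hre, Real.exp_add, Real.exp_sum, hBsum, Real.exp_sub]
      have hfac : ∀ j : Fin m,
          Real.exp (bval (h j) *
            ((∑ k, Wp n m I u g s j k * bval (w k)) + Cp n m I u g α s j))
          = (if h j then rr n m I u g α s j w else 1) := by
        intro j
        cases hj : h j
        · simp [bval]
        · simpa [bval] using hexpA j
      rw [Finset.prod_congr rfl fun j _ => hfac j, hc]
      unfold qq
      have hkey : ∀ P E1 E0 a : ℝ, E0 ≠ 0 → a ≠ 0 →
          P * (E1 / E0) = E1 * (a * E0)⁻¹ * a * P := by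
        intro P E1 E0 a h0 ha
        field_simp
      exact hkey _ _ _ _ (Real.exp_pos _).ne' (hα _).ne' 
    have hsum_prod : ∑ h : Fin m → Bool,
        ∏ j, (if h j then rr n m I u g α s j w else 1)
        = ∏ j : Fin m, (rr n m I u g α s j w + 1) := by
      calc ∑ h : Fin m → Bool, ∏ j, (if h j then rr n m I u g α s j w else 1)
          = ∑ h ∈ Fintype.piFinset (fun _ : Fin m => (Finset.univ : Finset Bool)),
              ∏ j, (if h j then rr n m I u g α s j w else 1) := by
            rw [Fintype.piFinset_univ]
        _ = ∏ j : Fin m, ∑ b : Bool, (if b then rr n m I u g α s j w else 1) :=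
            (Finset.prod_univ_sum (fun _ : Fin m => (Finset.univ : Finset Bool))
              (fun j b => if b then rr n m I u g α s j w else 1)).symm
        _ = ∏ j : Fin m, (rr n m I u g α s j w + 1) := by
            refine Finset.prod_congr rfl fun j _ => ?_
            rw [Fintype.sum_bool]
            simp
    calc (∑ h : Fin m → Bool,
        Real.exp ((∑ j, ∑ k, bval (h j) * Wp n m I u g s j k * bval (w k)) +
          (∑ j, Cp n m I u g α s j * bval (h j)) +
          (∑ k, Bp n m I u g s k * bval (w k))))
        = ∑ h : Fin m → Bool, (qq n m I u g s (Fin.last m) w * c * α (Fin.last m)) *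
            ∏ j : Fin m, (if h j then rr n m I u g α s j w else 1) :=
          Finset.sum_congr rfl fun h _ => hh h
      _ = (qq n m I u g s (Fin.last m) w * c * α (Fin.last m)) *
            ∑ h : Fin m → Bool, ∏ j, (if h j then rr n m I u g α s j w else 1) := by
          rw [Finset.mul_sum]
      _ = (qq n m I u g s (Fin.last m) w * c * α (Fin.last m)) *
            ∏ j : Fin m, (rr n m I u g α s j w + 1) := by rw [hsum_prod]
      _ = MM n m I u g α s w * c := by
          unfold MM
          rw [Finset.prod_congr rfl fun (j : Fin m) (_ : j ∈ Finset.univ) =>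
            add_comm (rr n m I u g α s j w) 1]
          ring
  unfold rbmDist
  rw [hnum v, Finset.sum_congr rfl fun w _ => hnum w, ← Finset.sum_mul]
  exact mul_div_mul_right _ _ hc0

lemma qq_tendsto (hgpos : ∀ i k b, k ∈ I i → 0 < g i k b) (i : Fin (m + 1))
    (v : Fin n → Bool) :
    Tendsto (fun s => qq n m I u g s i v) atTop (nhds (Pv n m I u g i v)) := by
  simp only [qq_formula n m I u g hgpos]
  unfold Pv
  by_cases hd : mis (I i) (u i) v = 0
  · rw [if_pos hd, hd]
    simp only [Nat.cast_zero, mul_zero, Real.exp_zero, mul_one]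
    exact tendsto_const_nhds
  · rw [if_neg hd]
    have hcoef : -(pen n m i * (mis (I i) (u i) v : ℝ)) < 0 := by
      have hpen := pen_pos n m i
      have hd' : (0:ℝ) < (mis (I i) (u i) v : ℝ) := by
        exact_mod_cast Nat.pos_of_ne_zero hd
      nlinarith
    have h1 : Tendsto (fun s : ℝ => -(s * pen n m i) * (mis (I i) (u i) v : ℝ))
        atTop atBot := by
      refine (Filter.tendsto_id.atTop_mul_const_of_neg hcoef).congr fun s => by
        simp only [id_eq]; ring
    have h2 := Real.tendsto_exp_atBot.comp h1
    simpa using tendsto_const_nhds.mul h2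

lemma rr_tendsto (hgpos : ∀ i k b, k ∈ I i → 0 < g i k b) (hα : ∀ i, 0 < α i) (j : Fin m)
    (v : Fin n → Bool) (hv : mis (I j.castSucc) (u j.castSucc) v ≠ 0) :
    Tendsto (fun s => rr n m I u g α s j v) atTop (nhds 0) := by
  have hne : j.castSucc ≠ Fin.last m := (Fin.castSucc_lt_last j).ne
  have key : ∀ s : ℝ, rr n m I u g α s j v =
      (α j.castSucc * ∏ k ∈ I j.castSucc, g j.castSucc k (v k)) /
        (α (Fin.last m) * ∏ k ∈ I (Fin.last m), g (Fin.last m) k (v k)) *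
        Real.exp (s * ((mis (I (Fin.last m)) (u (Fin.last m)) v : ℝ)
          - (n * m + 1) * (mis (I j.castSucc) (u j.castSucc) v : ℝ))) := by
    intro s
    unfold rr
    rw [qq_formula n m I u g hgpos, qq_formula n m I u g hgpos,
      show pen n m j.castSucc = (n * m + 1 : ℝ) from by simp [pen, hne],
      show pen n m (Fin.last m) = 1 from by simp [pen],
      show s * ((mis (I (Fin.last m)) (u (Fin.last m)) v : ℝ)
          - (n * m + 1) * (mis (I j.castSucc) (u j.castSucc) v : ℝ))
        = (-(s * (n * m + 1)) * (mis (I j.castSucc) (u j.castSucc) v : ℝ))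
          - (-(s * 1) * (mis (I (Fin.last m)) (u (Fin.last m)) v : ℝ)) from by ring,
      Real.exp_sub]
    ring
  simp only [key]
  have hcoef : ((mis (I (Fin.last m)) (u (Fin.last m)) v : ℝ)
      - (n * m + 1) * (mis (I j.castSucc) (u j.castSucc) v : ℝ)) < 0 := by
    have h1 : (1:ℝ) ≤ (mis (I j.castSucc) (u j.castSucc) v : ℝ) := by
      exact_mod_cast Nat.one_le_iff_ne_zero.mpr hv
    have h2 : (mis (I (Fin.last m)) (u (Fin.last m)) v : ℝ) ≤ n := by
      exact_mod_cast mis_le _ _ _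
    have hm : (1:ℝ) ≤ (m:ℝ) := by exact_mod_cast j.pos
    have hn : (0:ℝ) ≤ (n:ℝ) := Nat.cast_nonneg n
    have h3 : (n:ℝ) * m + 1 ≤ ((n:ℝ) * m + 1) * (mis (I j.castSucc) (u j.castSucc) v : ℝ) :=
      le_mul_of_one_le_right (by positivity) h1
    have h4 : (n:ℝ) ≤ (n:ℝ) * m := by nlinarith
    linarith
  have h1 : Tendsto (fun s : ℝ => s * ((mis (I (Fin.last m)) (u (Fin.last m)) v : ℝ)
      - (n * m + 1) * (mis (I j.castSucc) (u j.castSucc) v : ℝ))) atTop atBot :=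
    Filter.tendsto_id.atTop_mul_const_of_neg hcoef
  simpa using tendsto_const_nhds.mul (Real.tendsto_exp_atBot.comp h1)

lemma Pv_eq_zero {i : Fin (m + 1)} {v : Fin n → Bool}
    (h : mis (I i) (u i) v ≠ 0) : Pv n m I u g i v = 0 := by
  unfold Pv; exact if_neg h

lemma MM_tendsto (hgpos : ∀ i k b, k ∈ I i → 0 < g i k b) (hα : ∀ i, 0 < α i)
    (hdisj : ∀ i j (v : Fin n → Bool), i ≠ j →
      mis (I i) (u i) v = 0 → mis (I j) (u j) v = 0 → False)
    (v : Fin n → Bool) :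
    Tendsto (fun s => MM n m I u g α s v) atTop (nhds (∑ i, α i * Pv n m I u g i v)) := by
  by_cases hex : ∃ j : Fin m, mis (I j.castSucc) (u j.castSucc) v = 0
  · obtain ⟨j₀, hj₀⟩ := hex
    have hne_last : Fin.last m ≠ j₀.castSucc := ((Fin.castSucc_lt_last j₀).ne).symm
    have hmis : ∀ i : Fin (m + 1), i ≠ j₀.castSucc → mis (I i) (u i) v ≠ 0 :=
      fun i hi h => hdisj i j₀.castSucc v hi h hj₀
    have hMident : ∀ s : ℝ, MM n m I u g α s v =
        (α (Fin.last m) * qq n m I u g s (Fin.last m) v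
          + α j₀.castSucc * qq n m I u g s j₀.castSucc v) *
          ∏ j ∈ Finset.univ.erase j₀, (1 + rr n m I u g α s j v) := by
      intro s
      unfold MM
      rw [← Finset.mul_prod_erase Finset.univ _ (Finset.mem_univ j₀), ← mul_assoc]
      congr 1
      have h0 : α (Fin.last m) * qq n m I u g s (Fin.last m) v ≠ 0 :=
        (mul_pos (hα _) (qq_pos n m I u g s _ v)).ne'
      rw [mul_add, mul_one]
      congr 1
      unfold rr
      rw [mul_comm, div_mul_cancel₀ _ h0]
    simp only [hMident]
    have h1 : Tendsto (fun s => α (Fin.last m) * qq n m I u g s (Fin.last m) v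
        + α j₀.castSucc * qq n m I u g s j₀.castSucc v) atTop
        (nhds (α (Fin.last m) * Pv n m I u g (Fin.last m) v
          + α j₀.castSucc * Pv n m I u g j₀.castSucc v)) :=
      (Filter.Tendsto.const_mul _ (qq_tendsto n m I u g hgpos _ v)).add
        (Filter.Tendsto.const_mul _ (qq_tendsto n m I u g hgpos _ v))
    have h2 : Tendsto (fun s => ∏ j ∈ Finset.univ.erase j₀, (1 + rr n m I u g α s j v))
        atTop (nhds (∏ _j ∈ Finset.univ.erase j₀, (1:ℝ))) := by
      refine tendsto_finset_prod _ fun j hj => ?_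
      have hjne : j.castSucc ≠ j₀.castSucc :=
        fun hcc => (Finset.mem_erase.mp hj).1 (Fin.castSucc_injective m hcc)
      have hr := rr_tendsto n m I u g α hgpos hα j v (hmis _ hjne)
      simpa using tendsto_const_nhds.add hr
    have h3 := h1.mul h2
    have heq : (∑ i, α i * Pv n m I u g i v)
        = (α (Fin.last m) * Pv n m I u g (Fin.last m) v
            + α j₀.castSucc * Pv n m I u g j₀.castSucc v) *
          ∏ _j ∈ Finset.univ.erase j₀, (1:ℝ) := by
      rw [Finset.prod_const_one, mul_one, Pv_eq_zero n m I u g (hmis _ hne_last),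
        mul_zero, zero_add]
      refine Finset.sum_eq_single j₀.castSucc (fun i _ hi => ?_)
        (fun hi => absurd (Finset.mem_univ _) hi)
      rw [Pv_eq_zero n m I u g (hmis i hi), mul_zero]
    rw [heq]
    exact h3
  · push_neg at hex
    unfold MM
    have h1 : Tendsto (fun s => α (Fin.last m) * qq n m I u g s (Fin.last m) v) atTop
        (nhds (α (Fin.last m) * Pv n m I u g (Fin.last m) v)) :=
      Filter.Tendsto.const_mul _ (qq_tendsto n m I u g hgpos _ v)
    have h2 : Tendsto (fun s => ∏ j : Fin m, (1 + rr n m I u g α s j v))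
        atTop (nhds (∏ _j : Fin m, (1:ℝ))) := by
      refine tendsto_finset_prod _ fun j _ => ?_
      simpa using tendsto_const_nhds.add (rr_tendsto n m I u g α hgpos hα j v (hex j))
    have heq : (∑ i, α i * Pv n m I u g i v)
        = (α (Fin.last m) * Pv n m I u g (Fin.last m) v) * ∏ _j : Fin m, (1:ℝ) := by
      rw [Finset.prod_const_one, mul_one]
      refine Finset.sum_eq_single (Fin.last m) (fun i _ hi => ?_)
        (fun hi => absurd (Finset.mem_univ _) hi)
      obtain ⟨j, hj⟩ := Fin.exists_castSucc_eq.mpr hi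
      rw [Pv_eq_zero n m I u g (hj ▸ hex j), mul_zero]
    rw [heq]
    exact h1.mul h2

theorem core (hgpos : ∀ i k b, k ∈ I i → 0 < g i k b)
    (hgsum : ∀ i k, k ∈ I i → g i k false + g i k true = 1)
    (hdisj : ∀ i j (v : Fin n → Bool), i ≠ j →
      mis (I i) (u i) v = 0 → mis (I j) (u j) v = 0 → False)
    (hα : ∀ i, 0 < α i) (hsum : ∑ i, α i = 1) :
    (fun v => ∑ i, α i * ∏ k, gnf (I i) (u i) (g i) k (v k)) ∈ RBM n m := by
  have hPg : (fun v : Fin n → Bool => ∑ i, α i * ∏ k, gnf (I i) (u i) (g i) k (v k))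
      = fun v => ∑ i, α i * Pv n m I u g i v := by
    funext v
    refine Finset.sum_congr rfl fun i _ => ?_
    rw [prod_gnf]
    rfl
  rw [hPg]
  have hsumP : ∀ i, ∑ v : Fin n → Bool, Pv n m I u g i v = 1 := by
    intro i
    calc ∑ v : Fin n → Bool, Pv n m I u g i v
        = ∑ v : Fin n → Bool, ∏ k, gnf (I i) (u i) (g i) k (v k) :=
          Finset.sum_congr rfl fun v _ => (prod_gnf (I i) (u i) (g i) v).symm
      _ = 1 := sum_prod_gnf (I i) (u i) (g i) (hgsum i)
  have hdentt : Tendsto (fun s => ∑ v' : Fin n → Bool, MM n m I u g α s v') atTop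
      (nhds 1) := by
    have h := tendsto_finset_sum (Finset.univ : Finset (Fin n → Bool))
      (fun v' _ => MM_tendsto n m I u g α hgpos hα hdisj v')
    have hval : ∑ v' : Fin n → Bool, ∑ i, α i * Pv n m I u g i v' = 1 := by
      rw [Finset.sum_comm]
      calc ∑ i, ∑ v' : Fin n → Bool, α i * Pv n m I u g i v'
          = ∑ i, α i * ∑ v' : Fin n → Bool, Pv n m I u g i v' :=
            Finset.sum_congr rfl fun i _ => (Finset.mul_sum _ _ _).symm
        _ = ∑ i, α i := Finset.sum_congr rfl fun i _ => by rw [hsumP i, mul_one]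
        _ = 1 := hsum
    rwa [hval] at h
  have htt : Tendsto
      (fun s => rbmDist n m (Wp n m I u g s) (Cp n m I u g α s) (Bp n m I u g s))
      atTop (nhds (fun v => ∑ i, α i * Pv n m I u g i v)) := by
    rw [tendsto_pi_nhds]
    intro v
    simp only [rbm_eq n m I u g α hgpos hα]
    have hd := (MM_tendsto n m I u g α hgpos hα hdisj v).div hdentt one_ne_zero
    rw [div_one] at hd
    exact hd
  unfold RBM
  exact mem_closure_of_tendsto htt (Filter.Eventually.of_forall fun s =>
    ⟨Wp n m I u g s, Cp n m I u g α s, Bp n m I u g s, rfl⟩)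

end Core

end RBMAux

/-- Any mixture of `m+1` product distributions supported on pairwise disjoint
faces (cubical subsets) of the `n`-cube belongs to `RBM_{n,m}`. -/
theorem mixture_disjoint_products_mem_rbm (n m : ℕ)
    (F : Fin (m + 1) → Set (Fin n → Bool)) (hF : ∀ i, IsFace (F i))
    (hdisj : ∀ i j, i ≠ j → Disjoint (F i) (F j))
    (p : Fin (m + 1) → (Fin n → Bool) → ℝ)
    (hp : ∀ i, IsProb (p i) ∧ IsProductDist (p i) ∧ ∀ x, x ∉ F i → p i x = 0)
    (α : Fin (m + 1) → ℝ) (hα : ∀ i, 0 ≤ α i) (hsum : ∑ i, α i = 1) :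
    (fun v => ∑ i, α i * p i v) ∈ RBM n m := by
  classical
  choose I u hFeq using hF
  choose f hfprob hfeq using fun i => (hp i).2.1
  have hprob : ∀ i, IsProb (p i) := fun i => (hp i).1
  have hsupp : ∀ i x, x ∉ F i → p i x = 0 := fun i => (hp i).2.2
  -- on fixed coordinates the factors are deterministic
  have hfix : ∀ i k, k ∉ I i → f i k (u i k) = 1 ∧ f i k (!(u i k)) = 0 := by
    intro i k hk
    obtain ⟨v₀, -, hv₀⟩ := Finset.exists_ne_zero_of_sum_ne_zero
      (show (∑ v : Fin n → Bool, p i v) ≠ 0 by rw [(hprob i).2]; exact one_ne_zero)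
    have hv₀F : v₀ ∈ F i := by
      by_contra h
      exact hv₀ (hsupp i v₀ h)
    have hv₀face : ∀ k' ∉ I i, v₀ k' = u i k' := by
      rw [hFeq i] at hv₀F
      exact hv₀F
    have hfv₀ : ∀ k', f i k' (v₀ k') ≠ 0 := by
      have heq := hfeq i v₀
      rw [heq] at hv₀
      intro k'
      exact Finset.prod_ne_zero_iff.mp hv₀ k' (Finset.mem_univ k')
    set w := Function.update v₀ k (!(u i k)) with hw
    have hwF : w ∉ F i := by
      rw [hFeq i]
      intro hmem
      have h := hmem k hk
      rw [hw, Function.update_self] at h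
      simp at h
    have hpw : p i w = 0 := hsupp i w hwF
    rw [hfeq i w] at hpw
    obtain ⟨k', -, hk'0⟩ := Finset.prod_eq_zero_iff.mp hpw
    have hkk : k' = k := by
      by_contra hne
      rw [hw, Function.update_of_ne hne] at hk'0
      exact hfv₀ k' hk'0
    subst hkk
    rw [hw, Function.update_self] at hk'0
    have hsum1 : f i k' false + f i k' true = 1 := by
      have h := (hfprob i k').2
      rwa [Fintype.sum_bool, add_comm] at h
    refine ⟨?_, hk'0⟩
    cases hu : u i k'
    · rw [hu] at hk'0
      simp only [Bool.not_false] at hk'0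
      linarith
    · rw [hu] at hk'0
      simp only [Bool.not_true] at hk'0
      linarith
  -- normal form of the product distributions
  have hnf : ∀ i v, p i v = ∏ k, RBMAux.gnf (I i) (u i) (f i) k (v k) := by
    intro i v
    by_cases hv : ∀ k ∉ I i, v k = u i k
    · rw [hfeq i v]
      refine Finset.prod_congr rfl fun k _ => ?_
      by_cases hk : k ∈ I i
      · simp [RBMAux.gnf, hk]
      · rw [hv k hk]
        simp [RBMAux.gnf, hk, (hfix i k hk).1]
    · have hvF : v ∉ F i := by rw [hFeq i]; exact hv
      rw [hsupp i v hvF]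
      push_neg at hv
      obtain ⟨k, hk, hvk⟩ := hv
      exact (Finset.prod_eq_zero (Finset.mem_univ k)
        (by simp [RBMAux.gnf, hk, hvk])).symm
  -- combinatorial disjointness
  have hdisj' : ∀ i j (v : Fin n → Bool), i ≠ j →
      RBMAux.mis (I i) (u i) v = 0 → RBMAux.mis (I j) (u j) v = 0 → False := by
    intro i j v hij hi hj
    rw [RBMAux.mis_eq_zero] at hi hj
    have hvi : v ∈ F i := by rw [hFeq i]; exact hi
    have hvj : v ∈ F j := by rw [hFeq j]; exact hj
    exact Set.disjoint_left.mp (hdisj i j hij) hvi hvj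
  -- approximating family
  have hmem : ∀ ε ∈ Set.Ioi (0:ℝ),
      (fun v => ∑ i, ((α i + ε) / (1 + ((m:ℝ) + 1) * ε)) *
        ∏ k, RBMAux.gnf (I i) (u i) (fun k' b => (f i k' b + ε) / (1 + 2 * ε)) k (v k))
        ∈ RBM n m := by
    intro ε hε
    rw [Set.mem_Ioi] at hε
    have hm0 : (0:ℝ) ≤ (m:ℝ) := Nat.cast_nonneg m
    have hden2 : (0:ℝ) < 1 + 2 * ε := by linarith
    have hden1 : (0:ℝ) < 1 + ((m:ℝ) + 1) * ε := by nlinarith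
    refine RBMAux.core n m I u _ _ ?_ ?_ hdisj' ?_ ?_
    · intro i k b _
      have h0 := (hfprob i k).1 b
      exact div_pos (by linarith) hden2
    · intro i k _
      have h := (hfprob i k).2
      rw [Fintype.sum_bool] at h
      rw [← add_div, div_eq_one_iff_eq hden2.ne']
      linarith
    · intro i
      exact div_pos (by linarith [hα i]) hden1
    · rw [← Finset.sum_div, Finset.sum_add_distrib, hsum, Finset.sum_const,
        Finset.card_univ, Fintype.card_fin, nsmul_eq_mul,
        div_eq_one_iff_eq hden1.ne']
      push_cast
      ring
  -- limit as ε → 0⁺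
  have hε0 : Filter.Tendsto (fun ε : ℝ => ε) (nhdsWithin 0 (Set.Ioi 0)) (nhds 0) :=
    Filter.tendsto_id.mono_left nhdsWithin_le_nhds
  have htt : Filter.Tendsto (fun ε : ℝ =>
      (fun v => ∑ i, ((α i + ε) / (1 + ((m:ℝ) + 1) * ε)) *
        ∏ k, RBMAux.gnf (I i) (u i) (fun k' b => (f i k' b + ε) / (1 + 2 * ε)) k (v k)))
      (nhdsWithin 0 (Set.Ioi 0)) (nhds (fun v => ∑ i, α i * p i v)) := by
    rw [tendsto_pi_nhds]
    intro v
    refine tendsto_finset_sum _ fun i _ => ?_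
    have hα' : Filter.Tendsto (fun ε : ℝ => (α i + ε) / (1 + ((m:ℝ) + 1) * ε))
        (nhdsWithin 0 (Set.Ioi 0)) (nhds (α i)) := by
      have h1 : Filter.Tendsto (fun ε : ℝ => α i + ε)
          (nhdsWithin 0 (Set.Ioi 0)) (nhds (α i + 0)) := tendsto_const_nhds.add hε0
      have h2 : Filter.Tendsto (fun ε : ℝ => 1 + ((m:ℝ) + 1) * ε)
          (nhdsWithin 0 (Set.Ioi 0)) (nhds (1 + ((m:ℝ) + 1) * 0)) :=
        tendsto_const_nhds.add (hε0.const_mul _)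
      have h3 := h1.div h2 (by norm_num)
      simp only [add_zero, mul_zero, div_one] at h3
      exact h3
    have hprod : Filter.Tendsto (fun ε : ℝ =>
        ∏ k, RBMAux.gnf (I i) (u i) (fun k' b => (f i k' b + ε) / (1 + 2 * ε)) k (v k))
        (nhdsWithin 0 (Set.Ioi 0))
        (nhds (∏ k, RBMAux.gnf (I i) (u i) (f i) k (v k))) := by
      refine tendsto_finset_prod _ fun k _ => ?_
      by_cases hk : k ∈ I i
      · simp only [RBMAux.gnf, if_pos hk]
        have h1 : Filter.Tendsto (fun ε : ℝ => f i k (v k) + ε)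
            (nhdsWithin 0 (Set.Ioi 0)) (nhds (f i k (v k) + 0)) :=
          tendsto_const_nhds.add hε0
        have h2 : Filter.Tendsto (fun ε : ℝ => 1 + 2 * ε)
            (nhdsWithin 0 (Set.Ioi 0)) (nhds (1 + 2 * 0)) :=
          tendsto_const_nhds.add (hε0.const_mul _)
        have h3 := h1.div h2 (by norm_num)
        simp only [add_zero, mul_zero, div_one] at h3
        exact h3
      · simp only [RBMAux.gnf, if_neg hk]
        exact tendsto_const_nhds
    have h4 := hα'.mul hprod
    rwa [← hnf i v] at h4
  have hclosed : IsClosed (RBM n m) := by unfold RBM; exact isClosed_closure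
  exact hclosed.mem_of_tendsto htt (eventually_mem_nhdsWithin.mono hmem)
end
end

section
/- Let ξ = {X₁, …, X_{m+1}} be a collection of m+1 pairwise disjoint cubical subsets of {0,1}^n. Then every probability distribution p on {0,1}^n that is supported on X₁ ∪ … ∪ X_{m+1} and is constant on each block X_i belongs to RBM_{n,m}. In particular, RBM_{n,m} contains the partition model of any partition of {0,1}^n into m+1 cubical blocks. -/
open scoped BigOperators

noncomputable section

open Filter Topology

lemma sum_pi_bool_prod {m : ℕ} (f : Fin m → Bool → ℝ) :
    ∑ h : Fin m → Bool, ∏ j, f j (h j) = ∏ j, (f j false + f j true) := by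
  rw [← Fintype.prod_sum]
  exact Finset.prod_congr rfl fun j _ => by rw [Fintype.sum_bool]; ring

lemma tendsto_exp_aux {ρ : ℝ} (hρ : ρ < 0) {β : ℝ → ℝ} {K : ℝ}
    (hβ : ∀ T : ℝ, 0 ≤ T → β T ≤ K) :
    Tendsto (fun T => Real.exp (T * ρ + β T)) atTop (𝓝 0) := by
  refine squeeze_zero' (g := fun T => Real.exp (T * ρ + K))
    (Eventually.of_forall fun T => (Real.exp_pos _).le) ?_ ?_
  · filter_upwards [eventually_ge_atTop (0:ℝ)] with T hT
    exact Real.exp_le_exp.mpr (by linarith [hβ T hT])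
  · exact Real.tendsto_exp_atBot.comp
      (tendsto_atBot_add_const_right _ K (tendsto_id.atTop_mul_const_of_neg hρ))

def faceGap {n : ℕ} (I : Finset (Fin n)) (u : Fin n → Bool) (v : Fin n → Bool) : ℝ :=
  ∑ l, (if l ∈ I then 0 else ((2 * bval (u l) - 1) * bval (v l) - bval (u l)))

def faceCoef {n : ℕ} (I : Finset (Fin n)) (u : Fin n → Bool) : Fin n → ℝ :=
  fun l => if l ∈ I then 0 else 2 * bval (u l) - 1

def faceConst {n : ℕ} (I : Finset (Fin n)) (u : Fin n → Bool) : ℝ :=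
  ∑ l, if l ∈ I then 0 else bval (u l)

lemma faceGap_eq {n : ℕ} (I : Finset (Fin n)) (u v : Fin n → Bool) :
    faceGap I u v = (∑ l, faceCoef I u l * bval (v l)) - faceConst I u := by
  unfold faceGap faceCoef faceConst
  rw [← Finset.sum_sub_distrib]
  refine Finset.sum_congr rfl fun l _ => ?_
  by_cases h : l ∈ I <;> simp [h]

lemma faceGap_term {n : ℕ} (I : Finset (Fin n)) (u v : Fin n → Bool) (l : Fin n) :
    (if l ∈ I then (0:ℝ) else ((2 * bval (u l) - 1) * bval (v l) - bval (u l)))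
      = if l ∈ I then 0 else (if v l = u l then 0 else -1) := by
  by_cases h : l ∈ I
  · simp [h]
  · simp only [h, if_false]
    cases hv : v l <;> cases hu : u l <;> simp [bval] <;> norm_num

lemma faceGap_nonpos {n : ℕ} (I : Finset (Fin n)) (u v : Fin n → Bool) :
    faceGap I u v ≤ 0 := by
  refine Finset.sum_nonpos fun l _ => ?_
  rw [faceGap_term]
  by_cases h : l ∈ I
  · simp [h]
  · by_cases h2 : v l = u l <;> simp [h, h2]

lemma faceGap_of_mem {n : ℕ} (I : Finset (Fin n)) (u v : Fin n → Bool)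
    (hv : ∀ l ∉ I, v l = u l) : faceGap I u v = 0 := by
  refine Finset.sum_eq_zero fun l _ => ?_
  rw [faceGap_term]
  by_cases h : l ∈ I
  · simp [h]
  · simp [h, hv l h]

lemma faceGap_of_notMem {n : ℕ} (I : Finset (Fin n)) (u v : Fin n → Bool)
    (hv : ¬ ∀ l ∉ I, v l = u l) : faceGap I u v ≤ -1 := by
  push_neg at hv
  obtain ⟨l₀, hl₀I, hl₀⟩ := hv
  unfold faceGap
  rw [← Finset.add_sum_erase _ _ (Finset.mem_univ l₀)]
  have h1 : (if l₀ ∈ I then (0:ℝ) else ((2 * bval (u l₀) - 1) * bval (v l₀) - bval (u l₀))) = -1 := by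
    rw [faceGap_term]; simp [hl₀I, hl₀]
  have h2 : ∑ l ∈ Finset.univ.erase l₀,
      (if l ∈ I then (0:ℝ) else ((2 * bval (u l) - 1) * bval (v l) - bval (u l))) ≤ 0 := by
    refine Finset.sum_nonpos fun l _ => ?_
    rw [faceGap_term]
    by_cases h : l ∈ I
    · simp [h]
    · by_cases h2 : v l = u l <;> simp [h, h2]
  linarith

lemma faceGap_ge {n : ℕ} (I : Finset (Fin n)) (u v : Fin n → Bool) :
    -(n:ℝ) ≤ faceGap I u v := by
  unfold faceGap
  calc -(n:ℝ) = ∑ _l : Fin n, (-1 : ℝ) := by simp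
    _ ≤ _ := by
      refine Finset.sum_le_sum fun l _ => ?_
      rw [faceGap_term]
      by_cases h : l ∈ I
      · simp [h]
      · by_cases h2 : v l = u l <;> simp [h, h2]

theorem aux_main (n m : ℕ)
    (X : Fin (m + 1) → Set (Fin n → Bool)) (hX : ∀ i, IsFace (X i))
    (hdisj : ∀ i j, i ≠ j → Disjoint (X i) (X j))
    (p : (Fin n → Bool) → ℝ) (hp : IsProb p)
    (hsupp : ∀ v, p v ≠ 0 → v ∈ ⋃ i, X i)
    (hconst : ∀ i, ∀ x ∈ X i, ∀ y ∈ X i, p x = p y)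
    (hpos : ∃ v ∈ X 0, p v ≠ 0) :
    p ∈ RBM n m := by
  choose I u hXu using hX
  have hmemX : ∀ i (v : Fin n → Bool), v ∈ X i ↔ ∀ l ∉ I i, v l = u i l := by
    intro i v; rw [hXu i]; exact Iff.rfl
  have humem : ∀ i, u i ∈ X i := fun i => (hmemX i (u i)).mpr fun l _ => rfl
  set g : Fin (m + 1) → (Fin n → Bool) → ℝ := fun i => faceGap (I i) (u i) with hgdef
  have hg0 : ∀ i v, v ∈ X i → g i v = 0 := fun i v hv => faceGap_of_mem _ _ _ ((hmemX i v).mp hv)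
  have hgle : ∀ i v, g i v ≤ 0 := fun i v => faceGap_nonpos _ _ _
  have hgn : ∀ i v, v ∉ X i → g i v ≤ -1 :=
    fun i v hv => faceGap_of_notMem _ _ _ (fun h => hv ((hmemX i v).mpr h))
  have hglb : ∀ i v, -(n:ℝ) ≤ g i v := fun i v => faceGap_ge _ _ _
  set c0 : ℝ := p (u 0) with hc0def
  have hc0 : 0 < c0 := by
    obtain ⟨v₀, hv₀X, hv₀⟩ := hpos
    have h1 : p (u 0) = p v₀ := hconst 0 (u 0) (humem 0) v₀ hv₀X
    have h2 := hp.1 v₀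
    rw [hc0def, h1]
    exact lt_of_le_of_ne h2 (Ne.symm hv₀)
  set β : ℝ → Fin m → ℝ := fun T j => Real.log ((p (u j.succ) + Real.exp (-T)) / c0) with hβdef
  have hargpos : ∀ (T : ℝ) (j : Fin m), 0 < (p (u j.succ) + Real.exp (-T)) / c0 :=
    fun T j => div_pos (add_pos_of_nonneg_of_pos (hp.1 _) (Real.exp_pos _)) hc0
  have hexpβ : ∀ (T : ℝ) (j : Fin m), Real.exp (β T j) = (p (u j.succ) + Real.exp (-T)) / c0 :=
    fun T j => Real.exp_log (hargpos T j)
  have hβle : ∀ (j : Fin m) (T : ℝ), 0 ≤ T →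
      β T j ≤ Real.log ((p (u j.succ) + 1) / c0) := by
    intro j T hT
    apply Real.log_le_log (hargpos T j)
    have h : Real.exp (-T) ≤ 1 := Real.exp_le_one_iff.mpr (by linarith)
    exact (div_le_div_iff_of_pos_right hc0).mpr (by linarith)
  set a : Fin (m + 1) → Fin n → ℝ := fun i => faceCoef (I i) (u i) with hadef
  set κ : Fin (m + 1) → ℝ := fun i => faceConst (I i) (u i) with hκdef
  have hgeq : ∀ i v, g i v = (∑ l, a i l * bval (v l)) - κ i := fun i v => faceGap_eq _ _ _
  set W : ℝ → Matrix (Fin m) (Fin n) ℝ :=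
    fun T j l => ((n:ℝ) + 1) * T * a j.succ l - T * a 0 l with hWdef
  set C : ℝ → Fin m → ℝ :=
    fun T j => T * κ 0 - ((n:ℝ) + 1) * T * κ j.succ + β T j with hCdef
  set B : ℝ → Fin n → ℝ := fun T l => T * a 0 l with hBdef
  set E : ℝ → Fin m → (Fin n → Bool) → ℝ :=
    fun T j v => T * (((n:ℝ) + 1) * g j.succ v - g 0 v) + β T j with hEdef
  have hE : ∀ (T : ℝ) (j : Fin m) (v : Fin n → Bool),
      (∑ l, W T j l * bval (v l)) + C T j = E T j v := by
    intro T j v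
    have h1 : ∑ l, W T j l * bval (v l)
        = ((n:ℝ) + 1) * T * (∑ l, a j.succ l * bval (v l)) - T * (∑ l, a 0 l * bval (v l)) := by
      rw [Finset.mul_sum, Finset.mul_sum, ← Finset.sum_sub_distrib]
      exact Finset.sum_congr rfl fun l _ => by simp only [hWdef]; ring
    rw [h1]
    simp only [hCdef, hEdef]
    rw [hgeq j.succ v, hgeq 0 v]
    ring
  set G : ℝ → (Fin n → Bool) → ℝ :=
    fun T v => Real.exp (T * g 0 v) * ∏ j, (1 + Real.exp (E T j v)) with hGdef
  have hnum : ∀ (T : ℝ) (v : Fin n → Bool), (∑ h : Fin m → Bool,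
      Real.exp ((∑ j, ∑ i, bval (h j) * W T j i * bval (v i)) +
        (∑ j, C T j * bval (h j)) + (∑ i, B T i * bval (v i))))
      = Real.exp (T * κ 0) * G T v := by
    intro T v
    have hexp : ∀ h : Fin m → Bool,
        (∑ j, ∑ i, bval (h j) * W T j i * bval (v i)) + (∑ j, C T j * bval (h j))
          + (∑ i, B T i * bval (v i))
        = (∑ j, bval (h j) * E T j v) + (T * κ 0 + T * g 0 v) := by
      intro h
      have h2 : ∀ j, bval (h j) * E T j v
          = (∑ i, bval (h j) * W T j i * bval (v i)) + C T j * bval (h j) := by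
        intro j
        rw [← hE T j v, mul_add, Finset.mul_sum]
        congr 1
        · exact Finset.sum_congr rfl fun l _ => by ring
        · ring
      rw [Finset.sum_congr rfl fun j _ => h2 j, Finset.sum_add_distrib]
      have h3 : (∑ i, B T i * bval (v i)) = T * κ 0 + T * g 0 v := by
        have h4 : (∑ i, B T i * bval (v i)) = T * ∑ l, a 0 l * bval (v l) := by
          rw [Finset.mul_sum]
          exact Finset.sum_congr rfl fun l _ => by simp only [hBdef]; ring
        rw [h4, hgeq 0 v]
        ring
      rw [h3]
    rw [Finset.sum_congr rfl fun h _ => congrArg Real.exp (hexp h)]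
    have h4 : ∀ h : Fin m → Bool,
        Real.exp ((∑ j, bval (h j) * E T j v) + (T * κ 0 + T * g 0 v))
        = (∏ j, Real.exp (bval (h j) * E T j v)) * Real.exp (T * κ 0 + T * g 0 v) := by
      intro h; rw [Real.exp_add, Real.exp_sum]
    rw [Finset.sum_congr rfl fun h _ => h4 h, ← Finset.sum_mul,
      sum_pi_bool_prod (f := fun j b => Real.exp (bval b * E T j v))]
    simp only [hGdef, show bval false = 0 from rfl, show bval true = 1 from rfl,
      zero_mul, Real.exp_zero, one_mul, Real.exp_add]
    ring
  have hrbm : ∀ (T : ℝ) (v : Fin n → Bool),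
      rbmDist n m (W T) (C T) (B T) v = G T v / ∑ v', G T v' := by
    intro T v
    show (∑ h : Fin m → Bool, _) / _ = _
    rw [hnum T v, Finset.sum_congr rfl fun v' _ => hnum T v', ← Finset.mul_sum,
      mul_div_mul_left _ _ (Real.exp_ne_zero _)]
  have hρneg : ∀ (v : Fin n → Bool) (j : Fin m), v ∉ X j.succ →
      ((n:ℝ) + 1) * g j.succ v - g 0 v < 0 := by
    intro v j hv
    have h1 := hgn j.succ v hv
    have h2 := hglb 0 v
    have h3 : ((n:ℝ) + 1) * g j.succ v ≤ ((n:ℝ) + 1) * (-1) :=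
      mul_le_mul_of_nonneg_left h1 (by positivity)
    linarith
  have hfac : ∀ (v : Fin n → Bool) (j : Fin m), v ∉ X j.succ →
      Tendsto (fun T => 1 + Real.exp (E T j v)) atTop (𝓝 1) := by
    intro v j hv
    have h := tendsto_exp_aux (hρneg v j hv) (K := Real.log ((p (u j.succ) + 1) / c0))
      (β := fun T => β T j) (fun T hT => hβle j T hT)
    have h0 : Tendsto (fun T => Real.exp (E T j v)) atTop (𝓝 0) := by
      simpa only [hEdef] using h
    simpa using (tendsto_const_nhds (x := (1:ℝ))).add h0
  have hexp0 : ∀ (v : Fin n → Bool), v ∉ X 0 →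
      Tendsto (fun T => Real.exp (T * g 0 v)) atTop (𝓝 0) := by
    intro v hv
    have h := tendsto_exp_aux (show g 0 v < 0 by linarith [hgn 0 v hv])
      (β := fun _ => (0:ℝ)) (K := 0) (fun _ _ => le_refl 0)
    simpa using h
  have hlim : ∀ v, Tendsto (fun T => G T v) atTop (𝓝 (p v / c0)) := by
    intro v
    by_cases hv0 : v ∈ X 0
    · have hpv : p v = c0 := hconst 0 v hv0 (u 0) (humem 0)
      have hprod : Tendsto (fun T => ∏ j, (1 + Real.exp (E T j v))) atTop (𝓝 1) := by
        have h := tendsto_finset_prod (f := fun j T => 1 + Real.exp (E T j v))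
          Finset.univ (fun j _ => hfac v j
            (fun hmem => Set.disjoint_left.mp (hdisj 0 j.succ (Fin.succ_ne_zero j).symm) hv0 hmem))
        simpa using h
      rw [hpv, div_self hc0.ne']
      have hGeq : (fun T => G T v) = fun T => ∏ j, (1 + Real.exp (E T j v)) := by
        funext T
        simp only [hGdef, hg0 0 v hv0, mul_zero, Real.exp_zero, one_mul]
      rw [hGeq]
      exact hprod
    · by_cases hvj : ∃ j : Fin m, v ∈ X j.succ
      · obtain ⟨j₀, hj₀⟩ := hvj
        have hpv : p v = p (u j₀.succ) := hconst j₀.succ v hj₀ (u j₀.succ) (humem j₀.succ)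
        have hgj₀ : g j₀.succ v = 0 := hg0 j₀.succ v hj₀
        have hsplit : (fun T => G T v) = fun T =>
            (Real.exp (T * g 0 v) * (1 + Real.exp (E T j₀ v))) *
            ∏ j ∈ Finset.univ.erase j₀, (1 + Real.exp (E T j v)) := by
          funext T
          simp only [hGdef]
          rw [← Finset.mul_prod_erase _ _ (Finset.mem_univ j₀)]
          ring
        have hfirst : Tendsto (fun T => Real.exp (T * g 0 v) * (1 + Real.exp (E T j₀ v)))
            atTop (𝓝 (p (u j₀.succ) / c0)) := by
          have heq : ∀ T : ℝ, Real.exp (T * g 0 v) * (1 + Real.exp (E T j₀ v))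
              = Real.exp (T * g 0 v) + (p (u j₀.succ) + Real.exp (-T)) / c0 := by
            intro T
            rw [mul_add, mul_one, ← Real.exp_add]
            congr 1
            rw [← hexpβ T j₀]
            congr 1
            simp only [hEdef, hgj₀]
            ring
          simp only [heq]
          have h1 := hexp0 v hv0
          have h2 : Tendsto (fun T : ℝ => (p (u j₀.succ) + Real.exp (-T)) / c0)
              atTop (𝓝 (p (u j₀.succ) / c0)) := by
            have he : Tendsto (fun T : ℝ => Real.exp (-T)) atTop (𝓝 0) :=
              Real.tendsto_exp_atBot.comp tendsto_neg_atTop_atBot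
            have := (tendsto_const_nhds (x := p (u j₀.succ))).add he
            have := this.div_const c0
            simpa using this
          simpa using h1.add h2
        have hrest : Tendsto
            (fun T => ∏ j ∈ Finset.univ.erase j₀, (1 + Real.exp (E T j v)))
            atTop (𝓝 1) := by
          have h := tendsto_finset_prod (f := fun j T => 1 + Real.exp (E T j v))
            (Finset.univ.erase j₀) (fun j hj => hfac v j (fun hmem => by
              have hne : j.succ ≠ j₀.succ := by
                simpa [Fin.succ_inj] using Finset.ne_of_mem_erase hj
              exact Set.disjoint_left.mp (hdisj j.succ j₀.succ hne) hmem hj₀))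
          simpa using h
        rw [hpv, hsplit]
        simpa using hfirst.mul hrest
      · have hpv : p v = 0 := by
          by_contra hne
          obtain ⟨i, hi⟩ := Set.mem_iUnion.mp (hsupp v hne)
          rcases Fin.eq_zero_or_eq_succ i with h0 | ⟨j, hj⟩
          · exact hv0 (h0 ▸ hi)
          · exact hvj ⟨j, hj ▸ hi⟩
        rw [hpv, zero_div]
        have hnotin : ∀ j : Fin m, v ∉ X j.succ := fun j hmem => hvj ⟨j, hmem⟩
        have hprod : Tendsto (fun T => ∏ j, (1 + Real.exp (E T j v))) atTop (𝓝 1) := by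
          have h := tendsto_finset_prod (f := fun j T => 1 + Real.exp (E T j v))
            Finset.univ (fun j _ => hfac v j (hnotin j))
          simpa using h
        have h1 := hexp0 v hv0
        have := h1.mul hprod
        simpa only [hGdef, zero_mul] using this
  have hsum : Tendsto (fun T => ∑ v, G T v) atTop (𝓝 (1 / c0)) := by
    have h := tendsto_finset_sum Finset.univ (fun v (_ : v ∈ Finset.univ) => hlim v)
    have heq : (∑ v, p v / c0) = 1 / c0 := by rw [← Finset.sum_div, hp.2]
    simpa [heq] using h
  have hfinal : Tendsto (fun T => rbmDist n m (W T) (C T) (B T)) atTop (𝓝 p) := by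
    rw [tendsto_pi_nhds]
    intro v
    have h := (hlim v).div hsum (by positivity)
    have heq2 : p v / c0 / (1 / c0) = p v := by field_simp
    rw [show (fun T => rbmDist n m (W T) (C T) (B T) v)
        = fun T => G T v / ∑ v', G T v' from funext fun T => hrbm T v]
    rwa [heq2] at h
  exact mem_closure_of_tendsto hfinal
    (Eventually.of_forall fun T => ⟨W T, C T, B T, rfl⟩)

/-- If `X₁, …, X_{m+1}` are pairwise disjoint cubical subsets of `{0,1}^n`,
then every probability distribution supported on their union which is constant on each block
belongs to `RBM_{n,m}`; in particular, `RBM_{n,m}` contains the partition model of any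
partition of `{0,1}^n` into `m+1` cubical blocks. -/
theorem partition_model_mem_rbm (n m : ℕ)
    (X : Fin (m + 1) → Set (Fin n → Bool)) (hX : ∀ i, IsFace (X i))
    (hdisj : ∀ i j, i ≠ j → Disjoint (X i) (X j))
    (p : (Fin n → Bool) → ℝ) (hp : IsProb p)
    (hsupp : ∀ v, p v ≠ 0 → v ∈ ⋃ i, X i)
    (hconst : ∀ i, ∀ x ∈ X i, ∀ y ∈ X i, p x = p y) :
    p ∈ RBM n m := by
  have hex : ∃ v, p v ≠ 0 := by
    by_contra h
    push_neg at h
    have h2 := hp.2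
    rw [Finset.sum_eq_zero (fun v _ => h v)] at h2
    norm_num at h2
  obtain ⟨v₀, hv₀⟩ := hex
  obtain ⟨i₀, hi₀⟩ := Set.mem_iUnion.mp (hsupp v₀ hv₀)
  set σ := Equiv.swap (0 : Fin (m + 1)) i₀ with hσ
  have hunion : (⋃ i, X (σ i)) = ⋃ i, X i := by
    ext w
    simp only [Set.mem_iUnion]
    constructor
    · rintro ⟨i, hi⟩; exact ⟨σ i, hi⟩
    · rintro ⟨i, hi⟩; exact ⟨σ.symm i, by rwa [Equiv.apply_symm_apply]⟩
  refine aux_main n m (fun i => X (σ i)) (fun i => hX (σ i))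
    (fun i j hij => hdisj _ _ (fun h => hij (σ.injective h))) p hp
    (fun v hv => by rw [hunion]; exact hsupp v hv) (fun i => hconst (σ i)) ?_
  refine ⟨v₀, ?_, hv₀⟩
  show v₀ ∈ X (σ 0)
  rw [hσ, Equiv.swap_apply_left]
  exact hi₀
end
end

section
/- Let p be a probability distribution on {0,1}^n whose support can be covered by m+1 pairs of binary vectors, each pair differing in exactly one entry (i.e., by m+1 edges of the n-cube). Then p belongs to RBM_{n,m}. -/
open scoped BigOperators

noncomputable section

/-- numerator of the RBM distribution -/
noncomputable def rbmNum (n m : ℕ) (W : Matrix (Fin m) (Fin n) ℝ) (C : Fin m → ℝ)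
    (B : Fin n → ℝ) (v : Fin n → Bool) : ℝ :=
  ∑ h : Fin m → Bool,
      Real.exp ((∑ j, ∑ i, bval (h j) * W j i * bval (v i)) +
        (∑ j, C j * bval (h j)) + (∑ i, B i * bval (v i)))

lemma rbmDist_eq (n m : ℕ) (W : Matrix (Fin m) (Fin n) ℝ) (C : Fin m → ℝ)
    (B : Fin n → ℝ) (v : Fin n → Bool) :
    rbmDist n m W C B v = rbmNum n m W C B v / ∑ v', rbmNum n m W C B v' := rfl

lemma rbmNum_pos (n m : ℕ) (W : Matrix (Fin m) (Fin n) ℝ) (C : Fin m → ℝ)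
    (B : Fin n → ℝ) (v : Fin n → Bool) : 0 < rbmNum n m W C B v :=
  Finset.sum_pos (fun h _ => Real.exp_pos _) ⟨fun _ => true, Finset.mem_univ _⟩

lemma rbmDenom_pos (n m : ℕ) (W : Matrix (Fin m) (Fin n) ℝ) (C : Fin m → ℝ)
    (B : Fin n → ℝ) : 0 < ∑ v', rbmNum n m W C B v' :=
  Finset.sum_pos (fun v _ => rbmNum_pos n m W C B v) ⟨fun _ => true, Finset.mem_univ _⟩

lemma rbmDist_pos (n m : ℕ) (W : Matrix (Fin m) (Fin n) ℝ) (C : Fin m → ℝ)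
    (B : Fin n → ℝ) (v : Fin n → Bool) : 0 < rbmDist n m W C B v :=
  div_pos (rbmNum_pos _ _ _ _ _ _) (rbmDenom_pos _ _ _ _ _)

lemma rbmDist_sum_one (n m : ℕ) (W : Matrix (Fin m) (Fin n) ℝ) (C : Fin m → ℝ)
    (B : Fin n → ℝ) : ∑ v, rbmDist n m W C B v = 1 := by
  simp only [rbmDist_eq]
  rw [← Finset.sum_div, div_self (rbmDenom_pos n m W C B).ne']

lemma rbmNum_zero (n m : ℕ) (B : Fin n → ℝ) (v : Fin n → Bool) :
    rbmNum n m 0 0 B v = (2 ^ m : ℝ) * Real.exp (∑ i, B i * bval (v i)) := by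
  simp [rbmNum, Finset.sum_const, Matrix.zero_apply, Finset.card_univ]

lemma rbmDist_zero (n m : ℕ) (B : Fin n → ℝ) (v : Fin n → Bool) :
    rbmDist n m 0 0 B v =
      Real.exp (∑ i, B i * bval (v i)) /
        ∑ v' : Fin n → Bool, Real.exp (∑ i, B i * bval (v' i)) := by
  rw [rbmDist_eq]
  simp only [rbmNum_zero, ← Finset.mul_sum]
  rw [mul_div_mul_left _ _ (by positivity : ((2:ℝ) ^ m) ≠ 0)]

lemma rbmNum_cons (n m : ℕ) (W : Matrix (Fin m) (Fin n) ℝ) (C : Fin m → ℝ)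
    (B : Fin n → ℝ) (w : Fin n → ℝ) (c : ℝ) (v : Fin n → Bool) :
    rbmNum n (m + 1) (Matrix.of (Fin.cons w W)) (Fin.cons c C) B v =
      rbmNum n m W C B v * (1 + Real.exp ((∑ i, w i * bval (v i)) + c)) := by
  rw [rbmNum, ← (Fin.consEquiv (fun _ : Fin (m+1) => Bool)).sum_comp]
  rw [Fintype.sum_prod_type]
  simp only [Fin.consEquiv_apply]
  have key : ∀ (b : Bool) (h : Fin m → Bool),
      Real.exp ((∑ j : Fin (m+1), ∑ i, bval ((Fin.cons b h : Fin (m+1) → Bool) j) *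
            Matrix.of (Fin.cons w W) j i * bval (v i)) +
          (∑ j : Fin (m+1), (Fin.cons c C : Fin (m+1) → ℝ) j * bval ((Fin.cons b h : Fin (m+1) → Bool) j)) +
          (∑ i, B i * bval (v i))) =
        Real.exp (((∑ i, w i * bval (v i)) + c) * bval b) *
          Real.exp ((∑ j, ∑ i, bval (h j) * W j i * bval (v i)) +
            (∑ j, C j * bval (h j)) + (∑ i, B i * bval (v i))) := by
    intro b h
    rw [← Real.exp_add]
    congr 1
    rw [Fin.sum_univ_succ, Fin.sum_univ_succ]
    simp only [Fin.cons_zero, Fin.cons_succ, Matrix.of_apply]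
    have h1 : (∑ i, bval b * w i * bval (v i)) = bval b * ∑ i, w i * bval (v i) := by
      rw [Finset.mul_sum]; exact Finset.sum_congr rfl (fun i _ => by ring)
    have h0 : ∀ x, (Fin.cons w W : Fin (m+1) → Fin n → ℝ) 0 x = w x := fun _ => rfl
    have h0' : ∀ j x, (Fin.cons w W : Fin (m+1) → Fin n → ℝ) j.succ x = W j x := fun _ _ => rfl
    simp only [h0, h0']
    rw [h1]; ring
  simp only [key, ← Finset.mul_sum]
  rw [← Finset.sum_mul, Fintype.sum_bool, rbmNum]
  rw [show bval true = (1:ℝ) from rfl, show bval false = (0:ℝ) from rfl]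
  rw [mul_one, mul_zero, Real.exp_zero]
  ring

namespace RBMproof

open Filter Topology

variable {n : ℕ}

/-- number of mismatches with `x` outside coordinate `i` -/
def mism (x : Fin n → Bool) (i : Fin n) (v : Fin n → Bool) : ℕ :=
  ((Finset.univ.erase i).filter fun j => v j ≠ x j).card

lemma mism_self (x : Fin n → Bool) (i : Fin n) : mism x i x = 0 := by
  simp [mism]

lemma mism_update (x : Fin n → Bool) (i : Fin n) :
    mism x i (Function.update x i (!x i)) = 0 := by
  rw [mism, Finset.card_eq_zero, Finset.filter_eq_empty_iff]
  intro j hj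
  rw [Function.update_of_ne (Finset.ne_of_mem_erase hj)]
  simp

lemma ne_update (x : Fin n → Bool) (i : Fin n) : x ≠ Function.update x i (!x i) := by
  intro h
  have := congrFun h i
  rw [Function.update_self] at this
  simp at this

lemma eq_of_mism_zero {x v : Fin n → Bool} {i : Fin n} (h : mism x i v = 0) :
    v = x ∨ v = Function.update x i (!x i) := by
  rw [mism, Finset.card_eq_zero, Finset.filter_eq_empty_iff] at h
  have hj : ∀ j, j ≠ i → v j = x j := by
    intro j hji
    have := h (Finset.mem_erase.2 ⟨hji, Finset.mem_univ j⟩)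
    simpa using this
  by_cases hvi : v i = x i
  · left
    funext j
    by_cases hji : j = i
    · rw [hji]; exact hvi
    · exact hj j hji
  · right
    funext j
    by_cases hji : j = i
    · subst hji
      rw [Function.update_self]
      cases hx : x j <;> cases hv : v j <;> simp_all
    · rw [Function.update_of_ne hji]
      exact hj j hji

/-- the weight vector pointing to the edge `(x, i)` -/
def edgeVec (x : Fin n → Bool) (i : Fin n) (s t : ℝ) : Fin n → ℝ :=
  fun j => if j = i then s else t * (if x j then (1:ℝ) else -1)

/-- offset constant -/
def edgeC (x : Fin n → Bool) (i : Fin n) (γ t : ℝ) : ℝ :=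
  γ - t * ∑ j ∈ Finset.univ.erase i, bval (x j)

lemma exponent_eq (x v : Fin n → Bool) (i : Fin n) (s γ t : ℝ) :
    (∑ j, edgeVec x i s t j * bval (v j)) + edgeC x i γ t
      = γ + s * bval (v i) - t * (mism x i v : ℝ) := by
  rw [← Finset.sum_erase_add _ _ (Finset.mem_univ i)]
  have h1 : ∀ j ∈ Finset.univ.erase i,
      edgeVec x i s t j * bval (v j)
        = t * ((if x j then (1:ℝ) else -1) * bval (v j)) := by
    intro j hj
    rw [edgeVec, if_neg (Finset.ne_of_mem_erase hj)]; ring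
  rw [Finset.sum_congr rfl h1, ← Finset.mul_sum]
  have h2 : (∑ j ∈ Finset.univ.erase i, ((if x j then (1:ℝ) else -1) * bval (v j)))
      - (∑ j ∈ Finset.univ.erase i, bval (x j)) = -(mism x i v : ℝ) := by
    rw [← Finset.sum_sub_distrib]
    have h3 : ∀ j ∈ Finset.univ.erase i,
        ((if x j then (1:ℝ) else -1) * bval (v j)) - bval (x j)
          = -(if v j ≠ x j then (1:ℝ) else 0) := by
      intro j _
      cases hx : x j <;> cases hv : v j <;> simp [bval, hx, hv]
    rw [Finset.sum_congr rfl h3, Finset.sum_neg_distrib, Finset.sum_boole, mism]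
  have h4 : edgeVec x i s t i = s := by rw [edgeVec, if_pos rfl]
  rw [h4, edgeC]
  linear_combination t * h2

/-- choice of `γ` giving limit values `a`, `b` at the two ends of the edge -/
def gam (x : Fin n → Bool) (i : Fin n) (a b : ℝ) : ℝ :=
  if x i then Real.log b else Real.log a

/-- choice of `s` giving limit values `a`, `b` at the two ends of the edge -/
def sl (x : Fin n → Bool) (i : Fin n) (a b : ℝ) : ℝ :=
  if x i then Real.log a - Real.log b else Real.log b - Real.log a

/-- the limiting "bump" on the edge -/
def bump (x : Fin n → Bool) (i : Fin n) (a b : ℝ) : (Fin n → Bool) → ℝ :=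
  fun v => (if v = x then a else 0) + (if v = Function.update x i (!x i) then b else 0)

lemma bump_x (x : Fin n → Bool) (i : Fin n) (a b : ℝ) : bump x i a b x = a := by
  rw [bump, if_pos rfl, if_neg (ne_update x i), add_zero]

lemma bump_x' (x : Fin n → Bool) (i : Fin n) (a b : ℝ) :
    bump x i a b (Function.update x i (!x i)) = b := by
  rw [bump, if_pos rfl, if_neg (Ne.symm (ne_update x i)), zero_add]

lemma exp_gam_sl_x {x : Fin n → Bool} {i : Fin n} {a b : ℝ} (ha : 0 < a) (hb : 0 < b) :
    Real.exp (gam x i a b + sl x i a b * bval (x i)) = a := by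
  cases hx : x i with
  | false => simp [gam, sl, bval, hx, Real.exp_log ha]
  | true =>
      simp only [gam, sl, bval, hx, if_true, mul_one]
      rw [show Real.log b + (Real.log a - Real.log b) = Real.log a by ring]
      exact Real.exp_log ha

lemma exp_gam_sl_x' {x : Fin n → Bool} {i : Fin n} {a b : ℝ} (ha : 0 < a) (hb : 0 < b) :
    Real.exp (gam x i a b + sl x i a b * bval (Function.update x i (!x i) i)) = b := by
  rw [Function.update_self]
  cases hx : x i with
  | true => simp [gam, sl, bval, hx, Real.exp_log hb]
  | false =>
      norm_num [gam, sl, bval, hx]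
      exact Real.exp_log hb

open Filter Topology in
lemma tendsto_exp_edge {x : Fin n → Bool} {i : Fin n} {a b : ℝ}
    (ha : 0 < a) (hb : 0 < b) (v : Fin n → Bool) :
    Tendsto (fun t : ℝ =>
        Real.exp (gam x i a b + sl x i a b * bval (v i) - t * (mism x i v : ℝ)))
      atTop (𝓝 (bump x i a b v)) := by
  by_cases hm : mism x i v = 0
  · rw [hm]
    simp only [Nat.cast_zero, mul_zero, sub_zero]
    rcases eq_of_mism_zero hm with h | h
    · subst h
      rw [bump_x]
      exact tendsto_const_nhds.congr (fun t => by rw [exp_gam_sl_x ha hb])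
    · subst h
      rw [bump_x']
      exact tendsto_const_nhds.congr (fun t => by rw [exp_gam_sl_x' ha hb])
  · have hvx : v ≠ x := fun h => hm (by rw [h]; exact mism_self x i)
    have hvx' : v ≠ Function.update x i (!x i) :=
      fun h => hm (by rw [h]; exact mism_update x i)
    have hv : bump x i a b v = 0 := by simp [bump, hvx, hvx']
    rw [hv]
    have hD : (0:ℝ) < (mism x i v : ℝ) := by exact_mod_cast Nat.pos_of_ne_zero hm
    have h1 : Tendsto (fun t : ℝ =>
        gam x i a b + sl x i a b * bval (v i) - t * (mism x i v : ℝ)) atTop atBot := by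
      apply tendsto_atBot_add_const_left
      have := (tendsto_id (α := ℝ)).atTop_mul_const hD
      exact tendsto_neg_atTop_atBot.comp this |>.congr (fun t => by simp)
    exact Real.tendsto_exp_atBot.comp h1

lemma bump_nonneg (x : Fin n → Bool) (i : Fin n) {a b : ℝ} (ha : 0 ≤ a) (hb : 0 ≤ b)
    (v : Fin n → Bool) : 0 ≤ bump x i a b v := by
  rw [bump]
  positivity

lemma sum_bump (x : Fin n → Bool) (i : Fin n) (a b : ℝ) :
    ∑ v, bump x i a b v = a + b := by
  simp [bump, Finset.sum_add_distrib, Finset.sum_ite_eq']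

open Filter Topology in
lemma bump_mem_rbm (n m : ℕ) (x : Fin n → Bool) (i : Fin n) {a b : ℝ}
    (ha : 0 < a) (hb : 0 < b) :
    (fun v => bump x i a b v / (a + b)) ∈ RBM n m := by
  set s := sl x i a b
  set γ := gam x i a b
  have hval : ∀ (t : ℝ) (v : Fin n → Bool),
      rbmDist n m 0 0 (edgeVec x i s t) v =
        Real.exp (γ + s * bval (v i) - t * (mism x i v : ℝ)) /
          ∑ u : Fin n → Bool, Real.exp (γ + s * bval (u i) - t * (mism x i u : ℝ)) := by
    intro t v
    rw [rbmDist_zero]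
    have key : ∀ u : Fin n → Bool,
        Real.exp (∑ j, edgeVec x i s t j * bval (u j)) * Real.exp (edgeC x i γ t) =
          Real.exp (γ + s * bval (u i) - t * (mism x i u : ℝ)) := by
      intro u
      rw [← Real.exp_add, exponent_eq]
    rw [← mul_div_mul_right _ _ (Real.exp_ne_zero (edgeC x i γ t)), Finset.sum_mul]
    simp only [key]
  apply mem_closure_of_tendsto
    (f := fun t : ℝ => rbmDist n m 0 0 (edgeVec x i s t)) (b := atTop)
  · rw [tendsto_pi_nhds]
    intro v
    simp only [hval]
    have hnum := tendsto_exp_edge (x := x) (i := i) ha hb v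
    have hden : Tendsto (fun t : ℝ =>
        ∑ u : Fin n → Bool, Real.exp (γ + s * bval (u i) - t * (mism x i u : ℝ)))
        atTop (𝓝 (a + b)) := by
      rw [← sum_bump x i a b]
      exact tendsto_finset_sum _ (fun u _ => tendsto_exp_edge ha hb u)
    exact hnum.div hden (by positivity)
  · exact Filter.Eventually.of_forall (fun t => ⟨0, 0, edgeVec x i s t, rfl⟩)

open Filter Topology in
lemma tendsto_bump_eps {x : Fin n → Bool} {i : Fin n} {a b : ℝ} {u : ℕ → ℝ}
    (hu : Tendsto u atTop (𝓝 0)) (v : Fin n → Bool) :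
    Tendsto (fun k => bump x i (a + u k) (b + u k) v) atTop (𝓝 (bump x i a b v)) := by
  rw [bump]
  apply Tendsto.add
  · by_cases h : v = x
    · simp only [bump, h, if_pos rfl]
      simpa using tendsto_const_nhds.add hu
    · simp only [bump, if_neg h]
      exact tendsto_const_nhds
  · by_cases h : v = Function.update x i (!x i)
    · simp only [bump, h, if_pos rfl]
      simpa using tendsto_const_nhds.add hu
    · simp only [bump, if_neg h]
      exact tendsto_const_nhds

open Filter Topology in
lemma bump_mem_rbm' (n m : ℕ) (x : Fin n → Bool) (i : Fin n) {a b : ℝ}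
    (ha : 0 ≤ a) (hb : 0 ≤ b) (hab : a + b = 1) :
    bump x i a b ∈ RBM n m := by
  have hu : Tendsto (fun k : ℕ => 1 / ((k : ℝ) + 1)) atTop (𝓝 0) :=
    tendsto_one_div_add_atTop_nhds_zero_nat
  have hpos : ∀ k : ℕ, (0:ℝ) < 1 / ((k : ℝ) + 1) := fun k => by positivity
  have htend : Tendsto (fun k : ℕ => fun v =>
      bump x i (a + 1 / ((k : ℝ) + 1)) (b + 1 / ((k : ℝ) + 1)) v /
        ((a + 1 / ((k : ℝ) + 1)) + (b + 1 / ((k : ℝ) + 1)))) atTop (𝓝 (bump x i a b)) := by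
    rw [tendsto_pi_nhds]
    intro v
    have hnum := tendsto_bump_eps (x := x) (i := i) (a := a) (b := b) hu v
    have hden : Tendsto (fun k : ℕ =>
        (a + 1 / ((k : ℝ) + 1)) + (b + 1 / ((k : ℝ) + 1))) atTop (𝓝 (a + b)) := by
      simpa using (tendsto_const_nhds.add hu).add (tendsto_const_nhds.add hu)
    have := hnum.div hden (by rw [hab]; norm_num)
    rw [hab] at this
    rw [div_one] at this; exact this
  exact isClosed_closure.mem_of_tendsto htend (Filter.Eventually.of_forall (fun k =>
      bump_mem_rbm n m x i (by linarith [hpos k]) (by linarith [hpos k])))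

open Filter Topology in
lemma mix_mem_rbm (n m : ℕ) (W : Matrix (Fin m) (Fin n) ℝ) (C : Fin m → ℝ) (B : Fin n → ℝ)
    (x : Fin n → Bool) (i : Fin n) {α β : ℝ} (hα : 0 < α) (hβ : 0 < β) :
    (fun v => (rbmDist n m W C B v + bump x i α β v) / (1 + α + β)) ∈ RBM n (m + 1) := by
  set r := rbmDist n m W C B with hr
  set Z := ∑ v' : Fin n → Bool, rbmNum n m W C B v' with hZ
  have hZpos : 0 < Z := rbmDenom_pos n m W C B
  have hrx : 0 < r x := rbmDist_pos n m W C B x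
  have hrx' : 0 < r (Function.update x i (!x i)) := rbmDist_pos n m W C B _
  set a := α / r x with hadef
  set b := β / r (Function.update x i (!x i)) with hbdef
  have ha : 0 < a := div_pos hα hrx
  have hb : 0 < b := div_pos hβ hrx'
  set s := sl x i a b
  set γ := gam x i a b
  have hval : ∀ (t : ℝ) (v : Fin n → Bool),
      rbmDist n (m+1) (Matrix.of (Fin.cons (edgeVec x i s t) W))
          (Fin.cons (edgeC x i γ t) C) B v
        = (rbmNum n m W C B v *
            (1 + Real.exp (γ + s * bval (v i) - t * (mism x i v : ℝ)))) /
          ∑ u : Fin n → Bool, (rbmNum n m W C B u *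
            (1 + Real.exp (γ + s * bval (u i) - t * (mism x i u : ℝ)))) := by
    intro t v
    rw [rbmDist_eq]
    simp only [rbmNum_cons, exponent_eq]
  have key : ∀ v, rbmNum n m W C B v * (1 + bump x i a b v)
      = Z * (r v + bump x i α β v) := by
    intro v
    have hN : rbmNum n m W C B v = Z * r v := by
      rw [eq_comm, hr, rbmDist_eq, ← hZ]
      field_simp
    have hbb : r v * bump x i a b v = bump x i α β v := by
      by_cases h1 : v = x
      · subst h1
        rw [bump_x, bump_x, hadef]
        field_simp
      · by_cases h2 : v = Function.update x i (!x i)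
        · subst h2
          rw [bump_x', bump_x', hbdef]
          field_simp
        · simp [bump, h1, h2]
    rw [hN]
    linear_combination Z * hbb
  have hsum : ∑ u : Fin n → Bool, rbmNum n m W C B u * (1 + bump x i a b u)
      = Z * (1 + α + β) := by
    simp only [key]
    rw [← Finset.mul_sum, Finset.sum_add_distrib, sum_bump]
    rw [hr, rbmDist_sum_one]
    ring
  have hlim_eq : ∀ v, (rbmNum n m W C B v * (1 + bump x i a b v)) /
      (∑ u : Fin n → Bool, rbmNum n m W C B u * (1 + bump x i a b u))
        = (r v + bump x i α β v) / (1 + α + β) := by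
    intro v
    rw [key, hsum, mul_div_mul_left _ _ hZpos.ne']
  have hdenpos : 0 < ∑ u : Fin n → Bool, rbmNum n m W C B u * (1 + bump x i a b u) := by
    rw [hsum]
    have : 0 < 1 + α + β := by linarith
    positivity
  apply mem_closure_of_tendsto
    (f := fun t : ℝ => rbmDist n (m+1) (Matrix.of (Fin.cons (edgeVec x i s t) W))
      (Fin.cons (edgeC x i γ t) C) B) (b := atTop)
  · rw [tendsto_pi_nhds]
    intro v
    simp only [hval]
    rw [← hlim_eq v]
    have hnum : Tendsto (fun t : ℝ => rbmNum n m W C B v *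
        (1 + Real.exp (γ + s * bval (v i) - t * (mism x i v : ℝ)))) atTop
        (𝓝 (rbmNum n m W C B v * (1 + bump x i a b v))) :=
      tendsto_const_nhds.mul (tendsto_const_nhds.add (tendsto_exp_edge ha hb v))
    have hden : Tendsto (fun t : ℝ => ∑ u : Fin n → Bool, rbmNum n m W C B u *
        (1 + Real.exp (γ + s * bval (u i) - t * (mism x i u : ℝ)))) atTop
        (𝓝 (∑ u : Fin n → Bool, rbmNum n m W C B u * (1 + bump x i a b u))) :=
      tendsto_finset_sum _ (fun u _ =>
        tendsto_const_nhds.mul (tendsto_const_nhds.add (tendsto_exp_edge ha hb u)))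
    exact hnum.div hden hdenpos.ne'
  · exact Filter.Eventually.of_forall (fun t =>
      ⟨Matrix.of (Fin.cons (edgeVec x i s t) W), Fin.cons (edgeC x i γ t) C, B, rfl⟩)

lemma mix_mem_rbm_closure (n m : ℕ) (x : Fin n → Bool) (i : Fin n) {α β : ℝ}
    (hα : 0 < α) (hβ : 0 < β) {p : (Fin n → Bool) → ℝ} (hp : p ∈ RBM n m) :
    (fun v => (p v + bump x i α β v) / (1 + α + β)) ∈ RBM n (m + 1) := by
  set S := { p : (Fin n → Bool) → ℝ |
    ∃ (W : Matrix (Fin m) (Fin n) ℝ) (C : Fin m → ℝ) (B : Fin n → ℝ),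
      p = rbmDist n m W C B } with hS
  set Φ : ((Fin n → Bool) → ℝ) → ((Fin n → Bool) → ℝ) :=
    fun q v => (q v + bump x i α β v) / (1 + α + β) with hΦ
  have hc : Continuous Φ :=
    continuous_pi fun v => ((continuous_apply v).add continuous_const).div_const _
  have himg : Φ '' S ⊆ RBM n (m + 1) := by
    rintro _ ⟨q, ⟨W, C, B, rfl⟩, rfl⟩
    exact mix_mem_rbm n m W C B x i hα hβ
  have h2 : Φ p ∈ closure (Φ '' S) :=
    image_closure_subset_closure_image hc ⟨p, hp, rfl⟩
  exact closure_minimal himg isClosed_closure h2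

open Filter Topology in
lemma mix_mem_rbm_closure' (n m : ℕ) (x : Fin n → Bool) (i : Fin n) {α β : ℝ}
    (hα : 0 ≤ α) (hβ : 0 ≤ β) {p : (Fin n → Bool) → ℝ} (hp : p ∈ RBM n m) :
    (fun v => (p v + bump x i α β v) / (1 + α + β)) ∈ RBM n (m + 1) := by
  have hu : Tendsto (fun k : ℕ => 1 / ((k : ℝ) + 1)) atTop (𝓝 0) :=
    tendsto_one_div_add_atTop_nhds_zero_nat
  have hpos : ∀ k : ℕ, (0:ℝ) < 1 / ((k : ℝ) + 1) := fun k => by positivity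
  have htend : Tendsto (fun k : ℕ => fun v =>
      (p v + bump x i (α + 1 / ((k : ℝ) + 1)) (β + 1 / ((k : ℝ) + 1)) v) /
        (1 + (α + 1 / ((k : ℝ) + 1)) + (β + 1 / ((k : ℝ) + 1)))) atTop
      (𝓝 (fun v => (p v + bump x i α β v) / (1 + α + β))) := by
    rw [tendsto_pi_nhds]
    intro v
    have hnum : Tendsto (fun k : ℕ =>
        p v + bump x i (α + 1 / ((k : ℝ) + 1)) (β + 1 / ((k : ℝ) + 1)) v) atTop
        (𝓝 (p v + bump x i α β v)) :=
      tendsto_const_nhds.add (tendsto_bump_eps (x := x) (i := i) hu v)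
    have hden : Tendsto (fun k : ℕ =>
        1 + (α + 1 / ((k : ℝ) + 1)) + (β + 1 / ((k : ℝ) + 1))) atTop
        (𝓝 (1 + α + β)) := by
      have h1 : Tendsto (fun k : ℕ =>
          1 + (α + 1 / ((k : ℝ) + 1)) + (β + 1 / ((k : ℝ) + 1))) atTop
          (𝓝 (1 + (α + 0) + (β + 0))) :=
        (tendsto_const_nhds.add (tendsto_const_nhds.add hu)).add
          (tendsto_const_nhds.add hu)
      simpa using h1
    exact hnum.div hden (by positivity)
  exact isClosed_closure.mem_of_tendsto htend (Filter.Eventually.of_forall (fun k =>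
    mix_mem_rbm_closure n m x i (by linarith [hpos k]) (by linarith [hpos k]) hp))

lemma bump_div (x : Fin n → Bool) (i : Fin n) (a b c : ℝ) (v : Fin n → Bool) :
    bump x i (a / c) (b / c) v = bump x i a b v / c := by
  rw [bump, bump, add_div]
  congr 1 <;> split <;> simp

lemma aux_main (n : ℕ) : ∀ (m : ℕ) (p : (Fin n → Bool) → ℝ), IsProb p →
    ∀ (E : Fin (m + 1) → Set (Fin n → Bool)), (∀ k, IsEdge (E k)) →
    {v | p v ≠ 0} ⊆ (⋃ k, E k) → p ∈ RBM n m := by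
  intro m
  induction m with
  | zero =>
    intro p hp E hE hcover
    obtain ⟨x, i, hxi⟩ := hE 0
    have hsupp : ∀ v, v ≠ x → v ≠ Function.update x i (!x i) → p v = 0 := by
      intro v h1 h2
      by_contra h
      obtain ⟨k, hk⟩ := Set.mem_iUnion.1 (hcover h)
      have hk0 : k = 0 := Fin.fin_one_eq_zero k
      rw [hk0, hxi] at hk
      rcases hk with h' | h'
      · exact h1 h'
      · exact h2 h'
    have hpeq : p = bump x i (p x) (p (Function.update x i (!x i))) := by
      funext v
      by_cases h1 : v = x
      · subst h1; rw [bump_x]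
      · by_cases h2 : v = Function.update x i (!x i)
        · subst h2; rw [bump_x']
        · rw [hsupp v h1 h2]
          simp [bump, h1, h2]
    have hab : p x + p (Function.update x i (!x i)) = 1 := by
      rw [← sum_bump x i (p x) (p (Function.update x i (!x i))), ← hp.2]
      exact (Finset.sum_congr rfl fun v _ => (congrFun hpeq v)).symm
    rw [hpeq]
    exact bump_mem_rbm' n 0 x i (hp.1 x) (hp.1 _) hab
  | succ m ih =>
    intro p hp E hE hcover
    obtain ⟨x, i, hxi⟩ := hE (Fin.last (m + 1))
    have hxx' : x ≠ Function.update x i (!x i) := ne_update x i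
    set q : (Fin n → Bool) → ℝ :=
      fun v => if v = x ∨ v = Function.update x i (!x i) then 0 else p v with hq
    have hqnn : ∀ v, 0 ≤ q v := by
      intro v
      rw [hq]
      dsimp only
      split
      · exact le_refl 0
      · exact hp.1 v
    have hpsplit : ∀ v, p v = q v + bump x i (p x) (p (Function.update x i (!x i))) v := by
      intro v
      rw [hq, bump]
      dsimp only
      by_cases h1 : v = x
      · subst h1
        simp [hxx']
      · by_cases h2 : v = Function.update x i (!x i)
        · subst h2
          simp [Ne.symm hxx', hxx']
        · simp [h1, h2]
    have hsum_q : ∑ v, q v = 1 - (p x + p (Function.update x i (!x i))) := by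
      have h1 : ∑ v, p v
          = ∑ v, q v + (p x + p (Function.update x i (!x i))) := by
        rw [← sum_bump x i (p x) (p (Function.update x i (!x i))),
          ← Finset.sum_add_distrib]
        exact Finset.sum_congr rfl fun v _ => hpsplit v
      have h2 := hp.2
      linarith
    by_cases hμ : p x + p (Function.update x i (!x i)) = 1
    · have hq0 : ∀ v, q v = 0 := by
        have h0 : ∑ v, q v = 0 := by rw [hsum_q, hμ]; ring
        intro v
        exact (Finset.sum_eq_zero_iff_of_nonneg (fun v _ => hqnn v)).1 h0 v
          (Finset.mem_univ v)
      have hpeq : p = bump x i (p x) (p (Function.update x i (!x i))) := by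
        funext v
        rw [hpsplit v, hq0 v, zero_add]
      rw [hpeq]
      exact bump_mem_rbm' n (m + 1) x i (hp.1 x) (hp.1 _) hμ
    · have hqsum_nn : 0 ≤ 1 - (p x + p (Function.update x i (!x i))) := by
        rw [← hsum_q]
        exact Finset.sum_nonneg fun v _ => hqnn v
      have hc : 0 < 1 - (p x + p (Function.update x i (!x i))) :=
        lt_of_le_of_ne hqsum_nn (fun h => hμ (by linarith))
      set c := 1 - (p x + p (Function.update x i (!x i))) with hcdef
      set p' : (Fin n → Bool) → ℝ := fun v => q v / c with hp'
      have hp'prob : IsProb p' := by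
        constructor
        · intro v
          exact div_nonneg (hqnn v) hc.le
        · rw [hp']
          rw [← Finset.sum_div, hsum_q, div_self hc.ne']
      have hcov' : {v | p' v ≠ 0} ⊆ ⋃ k : Fin (m + 1), E (Fin.castSucc k) := by
        intro v hv
        have hqv : q v ≠ 0 := by
          intro h
          apply hv
          rw [hp']
          dsimp only
          rw [h, zero_div]
        have hvnot : ¬(v = x ∨ v = Function.update x i (!x i)) := by
          intro h
          apply hqv
          rw [hq]
          dsimp only
          rw [if_pos h]
        have hpv : p v ≠ 0 := by
          intro h
          apply hqv
          rw [hq]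
          dsimp only
          rw [if_neg hvnot]
          exact h
        obtain ⟨k, hk⟩ := Set.mem_iUnion.1 (hcover hpv)
        by_cases hklast : k = Fin.last (m + 1)
        · rw [hklast, hxi] at hk
          exact absurd hk hvnot
        · obtain ⟨j, rfl⟩ := Fin.exists_castSucc_eq.2 hklast
          exact Set.mem_iUnion.2 ⟨j, hk⟩
      have hp'mem : p' ∈ RBM n m :=
        ih p' hp'prob (fun k => E (Fin.castSucc k)) (fun k => hE _) hcov'
      have hmix := mix_mem_rbm_closure' n m x i
        (div_nonneg (hp.1 x) hc.le)
        (div_nonneg (hp.1 (Function.update x i (!x i))) hc.le) hp'mem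
      have hpeq : p = fun v =>
          (p' v + bump x i (p x / c) (p (Function.update x i (!x i)) / c) v) /
            (1 + p x / c + p (Function.update x i (!x i)) / c) := by
        funext v
        rw [bump_div]
        have hden : 1 + p x / c + p (Function.update x i (!x i)) / c = 1 / c := by
          field_simp
          linarith
        rw [hden, hp']
        dsimp only
        rw [← add_div, hpsplit v]
        field_simp
      rw [hpeq]
      exact hmix

end RBMproof

/-- Any probability distribution on `{0,1}^n` whose support can be covered by
`m+1` pairs of vectors differing in exactly one entry (edges of the `n`-cube) belongs to
`RBM_{n,m}`. -/
theorem support_covered_by_edges_mem_rbm (n m : ℕ)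
    (p : (Fin n → Bool) → ℝ) (hp : IsProb p)
    (E : Fin (m + 1) → Set (Fin n → Bool)) (hE : ∀ i, IsEdge (E i))
    (hcover : {v | p v ≠ 0} ⊆ ⋃ i, E i) :
    p ∈ RBM n m :=
  RBMproof.aux_main n m p hp E hE hcover
end
end

section
/- Every probability distribution on {0,1}^n whose support has cardinality at most m+1 belongs to RBM_{n,m}. -/
open scoped BigOperators

noncomputable section

namespace SmallSupportRBM

/-- real Hamming distance -/
noncomputable def hdist {n : ℕ} (x v : Fin n → Bool) : ℝ :=
  ∑ i, (if x i = v i then (0:ℝ) else 1)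

lemma hdist_comm {n : ℕ} (x v : Fin n → Bool) : hdist x v = hdist v x := by
  unfold hdist
  apply Finset.sum_congr rfl
  intro i _
  by_cases h : x i = v i <;> simp [h, Ne.symm, eq_comm]

lemma hdist_self {n : ℕ} (x : Fin n → Bool) : hdist x x = 0 := by simp [hdist]

lemma hdist_le {n : ℕ} (x v : Fin n → Bool) : hdist x v ≤ n := by
  calc hdist x v ≤ ∑ _i : Fin n, (1:ℝ) :=
        Finset.sum_le_sum fun i _ => by by_cases h : x i = v i <;> simp [h]
    _ = n := by simp

lemma one_le_hdist {n : ℕ} {x v : Fin n → Bool} (h : x ≠ v) : 1 ≤ hdist x v := by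
  obtain ⟨i, hi⟩ : ∃ i, x i ≠ v i := Function.ne_iff.mp h
  calc (1:ℝ) = if x i = v i then 0 else 1 := by simp [hi]
    _ ≤ hdist x v := Finset.single_le_sum (f := fun i => if x i = v i then (0:ℝ) else 1)
        (fun i _ => by by_cases h' : x i = v i <;> simp [h']) (Finset.mem_univ i)

lemma hdist_pos {n : ℕ} {x v : Fin n → Bool} (h : x ≠ v) : 0 < hdist x v :=
  lt_of_lt_of_le one_pos (one_le_hdist h)

lemma sum_sigma {n : ℕ} (x v : Fin n → Bool) :
    ∑ i, (2 * bval (x i) - 1) * bval (v i) = (∑ i, bval (x i)) - hdist x v := by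
  unfold hdist
  rw [← Finset.sum_sub_distrib]
  apply Finset.sum_congr rfl
  intro i _
  cases hx : x i <;> cases hv : v i <;> norm_num [bval]

/-- hidden sum factorization -/
lemma hidden_sum_eq (m : ℕ) (c : Fin m → ℝ) :
    ∑ h : Fin m → Bool, Real.exp (∑ j, bval (h j) * c j) = ∏ j, (1 + Real.exp (c j)) := by
  have : ∀ h : Fin m → Bool, Real.exp (∑ j, bval (h j) * c j)
      = ∏ j, Real.exp (bval (h j) * c j) := fun h => Real.exp_sum _ _
  simp_rw [this]
  rw [← Fintype.prod_sum (fun j (b : Bool) => Real.exp (bval b * c j))]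
  apply Finset.prod_congr rfl
  intro j _
  rw [Fintype.sum_bool]
  simp [bval, add_comm]

/-- unnormalized RBM weight in product form -/
noncomputable def rbmG (n m : ℕ) (W : Matrix (Fin m) (Fin n) ℝ) (C : Fin m → ℝ)
    (B : Fin n → ℝ) (v : Fin n → Bool) : ℝ :=
  Real.exp (∑ i, B i * bval (v i)) *
    ∏ j, (1 + Real.exp ((∑ i, W j i * bval (v i)) + C j))

lemma hidden_sum_eq' (n m : ℕ) (W : Matrix (Fin m) (Fin n) ℝ) (C : Fin m → ℝ)
    (B : Fin n → ℝ) (v : Fin n → Bool) :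
    (∑ h : Fin m → Bool,
      Real.exp ((∑ j, ∑ i, bval (h j) * W j i * bval (v i)) +
        (∑ j, C j * bval (h j)) + (∑ i, B i * bval (v i)))) = rbmG n m W C B v := by
  have key : ∀ h : Fin m → Bool,
      (∑ j, ∑ i, bval (h j) * W j i * bval (v i)) + (∑ j, C j * bval (h j))
        = ∑ j, bval (h j) * ((∑ i, W j i * bval (v i)) + C j) := by
    intro h
    rw [← Finset.sum_add_distrib]
    apply Finset.sum_congr rfl
    intro j _
    rw [mul_add, Finset.mul_sum]
    ring_nf
  simp_rw [key, Real.exp_add]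
  rw [← Finset.sum_mul, hidden_sum_eq m (fun j => (∑ i, W j i * bval (v i)) + C j), rbmG,
    mul_comm]

lemma rbmDist_eq_G (n m : ℕ) (W : Matrix (Fin m) (Fin n) ℝ) (C : Fin m → ℝ)
    (B : Fin n → ℝ) (v : Fin n → Bool) :
    rbmDist n m W C B v = rbmG n m W C B v / ∑ v', rbmG n m W C B v' := by
  unfold rbmDist
  rw [hidden_sum_eq']
  congr 1
  exact Finset.sum_congr rfl fun v' _ => hidden_sum_eq' n m W C B v'

lemma lim_exp_neg {c : ℝ} (hc : c < 0) :
    Filter.Tendsto (fun t : ℕ => Real.exp ((t:ℝ) * c)) Filter.atTop (nhds 0) :=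
  Real.tendsto_exp_atBot.comp (Filter.Tendsto.atTop_mul_const_of_neg hc tendsto_natCast_atTop_atTop)

end SmallSupportRBM

set_option maxHeartbeats 1600000 in
open SmallSupportRBM Filter in
/-- Every probability distribution on `{0,1}^n` whose support has cardinality
at most `m+1` belongs to `RBM_{n,m}`. -/
theorem small_support_mem_rbm (n m : ℕ)
    (p : (Fin n → Bool) → ℝ) (hp : IsProb p)
    (hsupp : Set.ncard {v | p v ≠ 0} ≤ m + 1) :
    p ∈ RBM n m := by
  classical
  obtain ⟨hnn, hsum⟩ := hp
  have hex : ∃ v, p v ≠ 0 := by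
    by_contra h
    push_neg at h
    rw [Finset.sum_congr rfl (fun v _ => h v)] at hsum
    simp at hsum
  obtain ⟨v0, hv0⟩ := hex
  have hv0pos : 0 < p v0 := (hnn v0).lt_of_ne (Ne.symm hv0)
  set S : Finset (Fin n → Bool) := Finset.univ.filter (fun v => p v ≠ 0) with hSdef
  have hScard : S.card ≤ m + 1 := by
    have hset : {v | p v ≠ 0} = ↑S := by ext v; simp [hSdef]
    rwa [hset, Set.ncard_coe_finset] at hsupp
  set S' : Finset (Fin n → Bool) := S.erase v0 with hS'def
  have hv0S : v0 ∈ S := by simp [hSdef, hv0]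
  have hS'card : S'.card ≤ m := by
    have h1 : S'.card = S.card - 1 := Finset.card_erase_of_mem hv0S
    omega
  have hcard : Fintype.card {x // x ∈ S'} ≤ Fintype.card (Fin m) := by
    simpa using hS'card
  obtain ⟨f⟩ := Function.Embedding.nonempty_of_card_le hcard
  -- facts about support members
  have hplive : ∀ x : {x // x ∈ S'}, p x.1 ≠ 0 ∧ x.1 ≠ v0 := by
    intro x
    have hx : x.1 ∈ S.erase v0 := x.2
    rw [Finset.mem_erase] at hx
    refine ⟨?_, hx.1⟩
    have hx2 : x.1 ∈ Finset.univ.filter (fun v => p v ≠ 0) := hx.2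
    rw [Finset.mem_filter] at hx2
    exact hx2.2
  have hrpos : ∀ x : {x // x ∈ S'}, 0 < p x.1 / p v0 := fun x =>
    div_pos ((hnn x.1).lt_of_ne (Ne.symm (hplive x).1)) hv0pos
  -- partial inverse of f
  set g : Fin m → Option {x // x ∈ S'} := fun j =>
    if h : ∃ x, f x = j then some h.choose else none with hgdef
  have hgf : ∀ x : {x // x ∈ S'}, g (f x) = some x := by
    intro x
    have h : ∃ y, f y = f x := ⟨x, rfl⟩
    simp only [hgdef, dif_pos h]
    congr 1
    exact f.injective h.choose_spec
  have hginv : ∀ j x, g j = some x → f x = j := by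
    intro j x hj
    by_cases h : ∃ y, f y = j
    · simp only [hgdef, dif_pos h] at hj
      obtain rfl : h.choose = x := Option.some_injective _ hj
      exact h.choose_spec
    · simp only [hgdef, dif_neg h] at hj
      exact absurd hj (by simp)
  -- parameters
  set Wt : ℕ → Matrix (Fin m) (Fin n) ℝ := fun t j i =>
    (g j).elim 0 (fun x => (t:ℝ) * (n+1) * (2 * bval (x.1 i) - 1)) with hWdef
  set Ct : ℕ → Fin m → ℝ := fun t j =>
    (g j).elim (-(t:ℝ)) (fun x =>
      -((t:ℝ) * (n+1) * ∑ i, bval (x.1 i)) + (t:ℝ) * hdist x.1 v0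
        + Real.log (p x.1 / p v0)) with hCdef
  set Bt : ℕ → Fin n → ℝ := fun t i => (t:ℝ) * (2 * bval (v0 i) - 1) with hBdef
  -- the effective hidden-unit exponent
  have hec_dead : ∀ (t : ℕ) j, g j = none → ∀ v : Fin n → Bool,
      (∑ i, Wt t j i * bval (v i)) + Ct t j = (t:ℝ) * (-1) := by
    intro t j hj v
    simp only [hWdef, hCdef, hj, Option.elim]
    simp
  have hec_live : ∀ (t : ℕ) j x, g j = some x → ∀ v : Fin n → Bool,
      (∑ i, Wt t j i * bval (v i)) + Ct t j
        = (t:ℝ) * (hdist x.1 v0 - (n+1) * hdist x.1 v) + Real.log (p x.1 / p v0) := by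
    intro t j x hj v
    simp only [hWdef, hCdef, hj, Option.elim]
    have h1 : ∑ i, (t:ℝ) * (n+1) * (2 * bval (x.1 i) - 1) * bval (v i)
        = (t:ℝ) * (n+1) * ((∑ i, bval (x.1 i)) - hdist x.1 v) := by
      rw [← sum_sigma x.1 v, Finset.mul_sum]
      apply Finset.sum_congr rfl
      intro i _
      ring
    rw [h1]
    ring
  -- the rescaled unnormalized distribution
  set H : ℕ → (Fin n → Bool) → ℝ := fun t v =>
    Real.exp (-((t:ℝ) * hdist v0 v)) *
      ∏ j, (1 + Real.exp ((∑ i, Wt t j i * bval (v i)) + Ct t j)) with hHdef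
  have hHpos : ∀ t v, 0 < H t v := by
    intro t v
    apply mul_pos (Real.exp_pos _)
    apply Finset.prod_pos
    intro j _
    positivity
  -- limits of individual factors for "non-selected" hidden units
  have lim_factor : ∀ (v : Fin n → Bool) (j : Fin m), (∀ x, g j = some x → x.1 ≠ v) →
      Tendsto (fun t : ℕ => 1 + Real.exp ((∑ i, Wt t j i * bval (v i)) + Ct t j))
        atTop (nhds 1) := by
    intro v j hj
    rcases hg : g j with _ | x
    · have he : (fun t : ℕ => 1 + Real.exp ((∑ i, Wt t j i * bval (v i)) + Ct t j))
          = fun t : ℕ => 1 + Real.exp ((t:ℝ) * (-1)) := by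
        funext t
        rw [hec_dead t j hg v]
      rw [he]
      have := (lim_exp_neg (by norm_num : (-1:ℝ) < 0)).const_add 1
      simpa using this
    · have hxv : x.1 ≠ v := hj x hg
      have hc : hdist x.1 v0 - (n+1) * hdist x.1 v < 0 := by
        have h1 : hdist x.1 v0 ≤ n := hdist_le _ _
        have h2 : 1 ≤ hdist x.1 v := one_le_hdist hxv
        have h3 : (0:ℝ) ≤ n := Nat.cast_nonneg n
        nlinarith
      have he : (fun t : ℕ => 1 + Real.exp ((∑ i, Wt t j i * bval (v i)) + Ct t j))
          = fun t : ℕ => 1 + Real.exp ((t:ℝ) * (hdist x.1 v0 - (n+1) * hdist x.1 v))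
              * (p x.1 / p v0) := by
        funext t
        rw [hec_live t j x hg v, Real.exp_add, Real.exp_log (hrpos x)]
      rw [he]
      have := ((lim_exp_neg hc).mul_const (p x.1 / p v0)).const_add 1
      simpa using this
  -- pointwise limit of H
  have hHlim : ∀ v, Tendsto (fun t => H t v) atTop (nhds (p v / p v0)) := by
    intro v
    by_cases hv : v ∈ S'
    · -- v is a secondary support point
      set x : {x // x ∈ S'} := ⟨v, hv⟩ with hxdef
      set j0 := f x with hj0def
      have hg0 : g j0 = some x := hgf x
      have hvne : v ≠ v0 := (hplive x).2
      have hdpos : 0 < hdist v0 v := hdist_pos (Ne.symm hvne)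
      have hsplit : ∀ t : ℕ, H t v
          = (Real.exp (-((t:ℝ) * hdist v0 v)) + p v / p v0)
            * ∏ j ∈ Finset.univ.erase j0,
                (1 + Real.exp ((∑ i, Wt t j i * bval (v i)) + Ct t j)) := by
        intro t
        have hfirst : Real.exp (-((t:ℝ) * hdist v0 v))
              * (1 + Real.exp ((∑ i, Wt t j0 i * bval (v i)) + Ct t j0))
            = Real.exp (-((t:ℝ) * hdist v0 v)) + p v / p v0 := by
          rw [hec_live t j0 x hg0 v]
          have h1 : hdist x.1 v = 0 := hdist_self v
          have h2 : hdist x.1 v0 = hdist v0 v := hdist_comm v v0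
          rw [h1, h2, Real.exp_add, Real.exp_log (hrpos x)]
          have h3 : (t:ℝ) * (hdist v0 v - (n+1) * 0) = (t:ℝ) * hdist v0 v := by ring
          rw [h3, mul_add, mul_one, ← mul_assoc, ← Real.exp_add, neg_add_cancel, Real.exp_zero,
            one_mul]
        simp only [hHdef]
        rw [← Finset.mul_prod_erase _ _ (Finset.mem_univ j0), ← mul_assoc, hfirst]
      have hlim1 : Tendsto (fun t : ℕ => Real.exp (-((t:ℝ) * hdist v0 v)) + p v / p v0)
          atTop (nhds (p v / p v0)) := by
        have h := (lim_exp_neg (by linarith : -(hdist v0 v) < 0)).add_const (p v / p v0)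
        simp only [zero_add] at h
        apply h.congr
        intro t
        rw [mul_neg]
      have hlim2 : Tendsto (fun t : ℕ => ∏ j ∈ Finset.univ.erase j0,
          (1 + Real.exp ((∑ i, Wt t j i * bval (v i)) + Ct t j))) atTop
          (nhds (∏ _j ∈ Finset.univ.erase j0, (1:ℝ))) := by
        apply tendsto_finset_prod
        intro j hjmem
        apply lim_factor
        intro y hy hyv
        apply (Finset.mem_erase.mp hjmem).1
        have : y = x := Subtype.ext (by rw [hyv])
        rw [← hginv j y hy, this, hj0def]
      have := hlim1.mul hlim2
      simp only [Finset.prod_const_one, mul_one] at this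
      exact Tendsto.congr (fun t => (hsplit t).symm) this
    · -- v is not a secondary support point
      have hall : ∀ j : Fin m, ∀ x, g j = some x → x.1 ≠ v := by
        intro j x hj hxv
        apply hv
        rw [← hxv]
        exact x.2
      have hlim2 : Tendsto (fun t : ℕ => ∏ j,
          (1 + Real.exp ((∑ i, Wt t j i * bval (v i)) + Ct t j))) atTop
          (nhds (∏ _j : Fin m, (1:ℝ))) :=
        tendsto_finset_prod _ (fun j _ => lim_factor v j (hall j))
      by_cases hvv : v = v0
      · have hzero : hdist v0 v = 0 := by rw [hvv]; exact hdist_self v0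
        have hpre : (fun t : ℕ => H t v) = fun t : ℕ => (1:ℝ) *
            ∏ j, (1 + Real.exp ((∑ i, Wt t j i * bval (v i)) + Ct t j)) := by
          funext t
          simp only [hHdef]
          rw [hzero]
          norm_num
        have hval : p v / p v0 = 1 := by rw [hvv]; exact div_self (ne_of_gt hv0pos)
        rw [hpre, hval]
        have := hlim2.const_mul (1:ℝ)
        simpa using this
      · have hpv : p v = 0 := by
          by_contra hpv
          apply hv
          rw [hS'def, Finset.mem_erase]
          exact ⟨hvv, by simp [hSdef, hpv]⟩
        have hdpos : 0 < hdist v0 v := hdist_pos (Ne.symm hvv)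
        have hpre : Tendsto (fun t : ℕ => Real.exp (-((t:ℝ) * hdist v0 v))) atTop (nhds 0) := by
          have h := lim_exp_neg (by linarith : -(hdist v0 v) < 0)
          apply h.congr
          intro t
          rw [mul_neg]
        have hfin := hpre.mul hlim2
        have hHv : (fun t : ℕ => H t v) = fun t : ℕ => Real.exp (-((t:ℝ) * hdist v0 v)) *
            ∏ j, (1 + Real.exp ((∑ i, Wt t j i * bval (v i)) + Ct t j)) := by
          funext t
          simp only [hHdef]
        rw [hHv, hpv, zero_div]
        simpa using hfin
  -- denominator limit
  have hDlim : Tendsto (fun t => ∑ v', H t v') atTop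
      (nhds (∑ v' : Fin n → Bool, p v' / p v0)) :=
    tendsto_finset_sum _ (fun v' _ => hHlim v')
  have hDsum : ∑ v' : Fin n → Bool, p v' / p v0 = 1 / p v0 := by
    rw [← Finset.sum_div, hsum]
  have hRatio : ∀ v, Tendsto (fun t => H t v / ∑ v', H t v') atTop (nhds (p v)) := by
    intro v
    have hne : (∑ v' : Fin n → Bool, p v' / p v0) ≠ 0 := by
      rw [hDsum]
      positivity
    have := (hHlim v).div hDlim hne
    have heq : (p v / p v0) / (∑ v' : Fin n → Bool, p v' / p v0) = p v := by
      rw [hDsum]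
      field_simp
    rwa [heq] at this
  -- relating rbmDist to H
  have hG : ∀ (t : ℕ) v, rbmG n m (Wt t) (Ct t) (Bt t) v
      = Real.exp ((t:ℝ) * ∑ i, bval (v0 i)) * H t v := by
    intro t v
    have hB : ∑ i, Bt t i * bval (v i)
        = (t:ℝ) * ((∑ i, bval (v0 i)) - hdist v0 v) := by
      simp only [hBdef]
      rw [← sum_sigma v0 v, Finset.mul_sum]
      apply Finset.sum_congr rfl
      intro i _
      ring
    simp only [rbmG, hHdef]
    rw [hB, ← mul_assoc, ← Real.exp_add]
    congr 2
    ring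
  have hEq : ∀ (t : ℕ) v, rbmDist n m (Wt t) (Ct t) (Bt t) v = H t v / ∑ v', H t v' := by
    intro t v
    rw [rbmDist_eq_G, hG t v, Finset.sum_congr rfl (fun v' _ => hG t v'), ← Finset.mul_sum]
    exact mul_div_mul_left _ _ (Real.exp_ne_zero _)
  -- conclusion
  have htend : Tendsto (fun t => rbmDist n m (Wt t) (Ct t) (Bt t)) atTop (nhds p) := by
    rw [tendsto_pi_nhds]
    intro v
    exact (hRatio v).congr (fun t => (hEq t v).symm)
  exact mem_closure_of_tendsto htend (Eventually.of_forall (fun t => ⟨Wt t, Ct t, Bt t, rfl⟩))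
end
end

section
/- Let ξ = {X₁, …, X_m} be a partition of a finite set X and let M₁, …, M_m be nonempty sets of probability distributions with M_i ⊆ P(X_i). Let M be the set of all mixtures Σ_i α_i p_i with p_i ∈ M_i, α_i ≥ 0, Σ_i α_i = 1. Then the maximal approximation error of M equals the maximum of the errors of the components: D_M := max_{p ∈ P(X)} D(p‖M) = max_{i=1,…,m} max_{r ∈ P(X_i)} D(r‖M_i). -/
open scoped BigOperators

noncomputable section

/- ### Auxiliary lemmas -/

lemma klTerm_zero' (b : ℝ) : klTerm 0 b = 0 := by simp [klTerm]

lemma KL_eq_top' {X : Type*} [Fintype X] {p q : X → ℝ} (h : ¬ ∀ x, p x ≠ 0 → q x ≠ 0) :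
    KL p q = ⊤ := if_neg h

lemma KL_eq_coe' {X : Type*} [Fintype X] {p q : X → ℝ} (h : ∀ x, p x ≠ 0 → q x ≠ 0) :
    KL p q = ((∑ x, klTerm (p x) (q x) : ℝ) : EReal) := if_pos h

lemma klTerm_smul' {a b c : ℝ} (hc : c ≠ 0) : klTerm a (c * b) = c * klTerm (a / c) b := by
  unfold klTerm
  by_cases ha : a = 0
  · simp [ha]
  · rw [if_neg ha, if_neg (div_ne_zero ha hc), div_div, ← mul_assoc,
      mul_div_cancel₀ a hc]

lemma isCompact_cube' {Y : Type*} [Fintype Y] :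
    IsCompact {f : Y → ℝ | ∀ y, f y ∈ Set.Icc (0:ℝ) 1} := by
  have h := isCompact_univ_pi (fun _ : Y => isCompact_Icc (a := (0:ℝ)) (b := 1))
  convert h using 1
  ext f
  simp only [Set.mem_setOf_eq, Set.mem_univ_pi]

/-- Let `{X₁,…,X_m}` (blocks `B i`) partition a finite set `X` and let
`M i ⊆ P(Xᵢ)` be nonempty. Then the maximal approximation error of the mixture model `MixM`
equals the maximum of the errors of the components:
`max_{p ∈ P(X)} D(p‖MixM) = max_i max_{r ∈ P(Xᵢ)} D(r‖M i)`. -/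
theorem max_kl_mixture_partition {X : Type*} [Fintype X] (m : ℕ)
    (B : Fin m → Finset X)
    (hdisj : ∀ i j, i ≠ j → Disjoint (B i) (B j))
    (hcover : ∀ x, ∃ i, x ∈ B i)
    (M : Fin m → Set (X → ℝ)) (hMne : ∀ i, (M i).Nonempty)
    (hM : ∀ i, ∀ q ∈ M i, IsProb q ∧ ∀ x ∉ B i, q x = 0)
    (MixM : Set (X → ℝ))
    (hMixM : MixM = {q | ∃ (α : Fin m → ℝ) (r : Fin m → X → ℝ),
        (∀ i, 0 ≤ α i) ∧ (∑ i, α i = 1) ∧ (∀ i, r i ∈ M i) ∧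
        q = fun x => ∑ i, α i * r i x}) :
    (⨆ p ∈ {p : X → ℝ | IsProb p}, KLset p (closure MixM)) =
      ⨆ i, ⨆ r ∈ {r : X → ℝ | IsProb r ∧ ∀ x ∉ B i, r x = 0},
        KLset r (closure (M i)) := by
  classical
  -- basic partition facts
  have hBmem : ∀ x (i j : Fin m), x ∈ B i → x ∈ B j → i = j := by
    intro x i j hi hj
    by_contra hne
    exact (Finset.disjoint_left.mp (hdisj i j hne) hi) hj
  have hUnion : Finset.univ.biUnion B = (Finset.univ : Finset X) := by
    ext x; simpa using hcover x
  have hsum_split : ∀ f : X → ℝ, ∑ x, f x = ∑ i, ∑ x ∈ B i, f x := by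
    intro f
    rw [← hUnion, Finset.sum_biUnion]
    intro i _ j _ hne
    exact hdisj i j hne
  -- closure of each component stays in the set of distributions supported on `B i`
  have hCl : ∀ i, closure (M i) ⊆
      {q : X → ℝ | (∀ x, 0 ≤ q x) ∧ (∑ x, q x = 1) ∧ ∀ x ∉ B i, q x = 0} := by
    intro i
    apply closure_minimal
    · intro q hq
      obtain ⟨⟨h1, h2⟩, h3⟩ := hM i q hq
      exact ⟨h1, h2, h3⟩
    · have h1 : IsClosed {q : X → ℝ | ∀ x, 0 ≤ q x} := by
        simp only [Set.setOf_forall]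
        exact isClosed_iInter fun x => isClosed_le continuous_const (continuous_apply x)
      have h2 : IsClosed {q : X → ℝ | ∑ x, q x = 1} :=
        isClosed_eq (continuous_finset_sum _ fun x _ => continuous_apply x) continuous_const
      have h3 : IsClosed {q : X → ℝ | ∀ x ∉ B i, q x = 0} := by
        simp only [Set.setOf_forall]
        exact isClosed_iInter fun x => isClosed_iInter fun _ =>
          isClosed_eq (continuous_apply x) continuous_const
      exact h1.inter (h2.inter h3)
  have hcube : ∀ i, closure (M i) ⊆ {f : X → ℝ | ∀ y, f y ∈ Set.Icc (0:ℝ) 1} := by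
    intro i q hq
    obtain ⟨h1, h2, _⟩ := hCl i hq
    intro y
    refine ⟨h1 y, ?_⟩
    calc q y ≤ ∑ x, q x := Finset.single_le_sum (fun x _ => h1 x) (Finset.mem_univ y)
    _ = 1 := h2
  have hKcomp : ∀ i, IsCompact (closure (M i)) := fun i =>
    isCompact_cube'.of_isClosed_subset isClosed_closure (hcube i)
  -- the simplex
  set A : Set (Fin m → ℝ) := {α | (∀ i, 0 ≤ α i) ∧ ∑ i, α i = 1} with hAdef
  have hAcomp : IsCompact A := by
    refine isCompact_cube'.of_isClosed_subset ?_ ?_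
    · have h1 : IsClosed {α : Fin m → ℝ | ∀ i, 0 ≤ α i} := by
        simp only [Set.setOf_forall]
        exact isClosed_iInter fun i => isClosed_le continuous_const (continuous_apply i)
      have h2 : IsClosed {α : Fin m → ℝ | ∑ i, α i = 1} :=
        isClosed_eq (continuous_finset_sum _ fun i _ => continuous_apply i) continuous_const
      exact h1.inter h2
    · rintro α ⟨h1, h2⟩ i
      refine ⟨h1 i, ?_⟩
      calc α i ≤ ∑ j, α j := Finset.single_le_sum (fun j _ => h1 j) (Finset.mem_univ i)
      _ = 1 := h2
  -- the mixture map and compactness of the mixture hull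
  set mix : (Fin m → ℝ) × (Fin m → (X → ℝ)) → (X → ℝ) :=
    fun z x => ∑ i, z.1 i * z.2 i x with hmixdef
  have hmixc : Continuous mix := by
    apply continuous_pi
    intro x
    apply continuous_finset_sum
    intro i _
    exact ((continuous_apply i).comp continuous_fst).mul
      ((continuous_apply x).comp ((continuous_apply i).comp continuous_snd))
  have hKMix : IsCompact (A ×ˢ Set.pi Set.univ (fun i => closure (M i))) :=
    hAcomp.prod (isCompact_univ_pi hKcomp)
  have hMixSub : closure MixM ⊆ mix '' (A ×ˢ Set.pi Set.univ (fun i => closure (M i))) := by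
    apply closure_minimal
    · intro q hq
      rw [hMixM] at hq
      obtain ⟨α, r, hα0, hα1, hrM, rfl⟩ := hq
      exact ⟨(α, r), ⟨⟨hα0, hα1⟩, fun i _ => subset_closure (hrM i)⟩, rfl⟩
    · exact (hKMix.image hmixc).isClosed
  -- collapse of a mixture on a block
  have hcollapse : ∀ (α : Fin m → ℝ) (rr : Fin m → X → ℝ),
      (∀ j, ∀ x ∉ B j, rr j x = 0) → ∀ i, ∀ x ∈ B i,
      ∑ j, α j * rr j x = α i * rr i x := by
    intro α rr hsupp i x hx
    apply Finset.sum_eq_single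
    · intro j _ hji
      rw [hsupp j x (fun hxj => hji (hBmem x j i hxj hx)), mul_zero]
    · intro h
      exact absurd (Finset.mem_univ i) h
  apply le_antisymm
  · -- LHS ≤ RHS
    apply iSup₂_le
    intro p hp
    obtain ⟨hp0, hp1⟩ : IsProb p := hp
    by_contra hcon
    push_neg at hcon
    obtain ⟨t, hSt, htK⟩ := EReal.exists_between_coe_real hcon
    -- the block weights
    set α : Fin m → ℝ := fun i => ∑ x ∈ B i, p x with hαdef
    have hα0 : ∀ i, 0 ≤ α i := fun i => Finset.sum_nonneg fun x _ => hp0 x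
    have hα1 : ∑ i, α i = 1 := by rw [← hsum_split p]; exact hp1
    have hpx_zero : ∀ i, α i = 0 → ∀ x ∈ B i, p x = 0 := by
      intro i h x hx
      have h1 : p x ≤ α i := Finset.single_le_sum (fun y _ => hp0 y) hx
      exact le_antisymm (h ▸ h1) (hp0 x)
    -- the conditional distributions
    set pdist : Fin m → X → ℝ := fun i x => if x ∈ B i then p x / α i else 0 with hpdef
    have hpdist : ∀ i, 0 < α i →
        pdist i ∈ {r : X → ℝ | IsProb r ∧ ∀ x ∉ B i, r x = 0} := by
      intro i hi
      refine ⟨⟨fun x => ?_, ?_⟩, fun x hx => if_neg hx⟩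
      · by_cases hx : x ∈ B i
        · rw [hpdef]; simp only [if_pos hx]
          exact div_nonneg (hp0 x) (hα0 i)
        · rw [hpdef]; simp only [if_neg hx]; exact le_rfl
      · rw [hpdef]
        simp only
        rw [Finset.sum_ite_mem, Finset.univ_inter, ← Finset.sum_div]
        exact div_self hi.ne'
    -- choose nearly optimal components
    have hex : ∀ i, ∃ s ∈ closure (M i), (0 < α i → KL (pdist i) s < (t : EReal)) := by
      intro i
      by_cases hi : 0 < α i
      · have hle : KLset (pdist i) (closure (M i)) ≤
            ⨆ j, ⨆ r ∈ {r : X → ℝ | IsProb r ∧ ∀ x ∉ B j, r x = 0},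
              KLset r (closure (M j)) :=
          le_iSup_of_le i (le_iSup₂_of_le (pdist i) (hpdist i hi) le_rfl)
        have hlt : KLset (pdist i) (closure (M i)) < (t : EReal) := lt_of_le_of_lt hle hSt
        rw [KLset] at hlt
        obtain ⟨s, hs⟩ := iInf_lt_iff.mp hlt
        obtain ⟨hsmem, hslt⟩ := iInf_lt_iff.mp hs
        exact ⟨s, hsmem, fun _ => hslt⟩
      · exact ⟨(hMne i).choose, subset_closure (hMne i).choose_spec, fun h => absurd h hi⟩
    choose r hrmem hrlt using hex
    have hsupp_r : ∀ j, ∀ x ∉ B j, r j x = 0 := fun j => (hCl j (hrmem j)).2.2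
    set q : X → ℝ := fun x => ∑ j, α j * r j x with hqdef
    have hqmem : q ∈ closure MixM := by
      have hcont : Continuous (fun rr : Fin m → X → ℝ => fun x => ∑ j, α j * rr j x) := by
        apply continuous_pi
        intro x
        apply continuous_finset_sum
        intro i _
        exact continuous_const.mul ((continuous_apply x).comp (continuous_apply i))
      have hmaps : Set.MapsTo (fun rr : Fin m → X → ℝ => fun x => ∑ j, α j * rr j x)
          (Set.pi Set.univ M) MixM := by
        intro rr hrr
        rw [hMixM]
        exact ⟨α, rr, hα0, hα1, fun j => hrr j (Set.mem_univ j), rfl⟩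
      have hrcl : r ∈ closure (Set.pi Set.univ M) := by
        rw [closure_pi_set]
        exact fun j _ => hrmem j
      exact map_mem_closure hcont hrcl hmaps
    -- support condition for KL p q
    have hcond : ∀ x, p x ≠ 0 → q x ≠ 0 := by
      intro x hx
      obtain ⟨i, hxB⟩ := hcover x
      have hq : q x = α i * r i x := hcollapse α r hsupp_r i x hxB
      have hαi : 0 < α i := by
        rcases (hα0 i).lt_or_eq with h | h
        · exact h
        · exact absurd (hpx_zero i h.symm x hxB) hx
      have hKLlt := hrlt i hαi
      have hc : ∀ y, pdist i y ≠ 0 → r i y ≠ 0 := by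
        by_contra hnc
        rw [KL_eq_top' hnc] at hKLlt
        exact absurd hKLlt not_top_lt
      have hpdx : pdist i x ≠ 0 := by
        rw [hpdef]; simp only [if_pos hxB]
        exact div_ne_zero hx hαi.ne'
      rw [hq]
      exact mul_ne_zero hαi.ne' (hc x hpdx)
    -- real bounds for the component divergences
    have hci : ∀ i, 0 < α i → ∑ x, klTerm (pdist i x) (r i x) ≤ t := by
      intro i hi
      have h := hrlt i hi
      by_cases hc : ∀ y, pdist i y ≠ 0 → r i y ≠ 0
      · rw [KL_eq_coe' hc] at h
        exact_mod_cast h.le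
      · rw [KL_eq_top' hc] at h
        exact absurd h not_top_lt
    -- the key sum computation
    have hblock : ∀ i, ∑ x ∈ B i, klTerm (p x) (q x)
        = α i * ∑ x, klTerm (pdist i x) (r i x) := by
      intro i
      by_cases hi : 0 < α i
      · rw [Finset.mul_sum,
          ← Finset.sum_subset (Finset.subset_univ (B i)) (fun x _ hx => by
            rw [hpdef]; simp only [if_neg hx]; rw [klTerm_zero', mul_zero])]
        apply Finset.sum_congr rfl
        intro x hxB
        have hq : q x = α i * r i x := hcollapse α r hsupp_r i x hxB
        rw [hq, hpdef]
        simp only [if_pos hxB]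
        exact klTerm_smul' hi.ne'
      · have hz : α i = 0 := le_antisymm (not_lt.mp hi) (hα0 i)
        rw [hz, zero_mul]
        apply Finset.sum_eq_zero
        intro x hx
        rw [hpx_zero i hz x hx, klTerm_zero']
    have hsum : ∑ x, klTerm (p x) (q x) ≤ t := by
      rw [hsum_split fun x => klTerm (p x) (q x)]
      calc ∑ i, ∑ x ∈ B i, klTerm (p x) (q x)
          = ∑ i, α i * ∑ x, klTerm (pdist i x) (r i x) := by
            exact Finset.sum_congr rfl fun i _ => hblock i
        _ ≤ ∑ i, α i * t := by
            apply Finset.sum_le_sum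
            intro i _
            rcases (hα0 i).lt_or_eq with h | h
            · exact mul_le_mul_of_nonneg_left (hci i h) (hα0 i)
            · rw [← h, zero_mul, zero_mul]
        _ = t := by rw [← Finset.sum_mul, hα1, one_mul]
    have hfin : KLset p (closure MixM) ≤ (t : EReal) := by
      refine le_trans (iInf₂_le q hqmem) ?_
      rw [KL_eq_coe' hcond]
      exact_mod_cast hsum
    exact absurd hfin (not_le.mpr htK)
  · -- RHS ≤ LHS
    apply iSup_le
    intro i
    apply iSup₂_le
    intro rdist hr
    obtain ⟨⟨hr0, hr1⟩, hrsupp⟩ := hr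
    have step : KLset rdist (closure (M i)) ≤ KLset rdist (closure MixM) := by
      refine le_iInf₂ fun q hq => ?_
      obtain ⟨⟨α, rr⟩, ⟨hαA, hrrK⟩, rfl⟩ := hMixSub hq
      by_cases hcond : ∀ x, rdist x ≠ 0 → mix (α, rr) x ≠ 0
      · have hsupp_rr : ∀ j, ∀ x ∉ B j, rr j x = 0 := fun j =>
          (hCl j (hrrK j (Set.mem_univ j))).2.2
        have hcol : ∀ x ∈ B i, mix (α, rr) x = α i * rr i x := fun x hx =>
          hcollapse α rr hsupp_rr i x hx
        have hx0 : ∃ x, rdist x ≠ 0 := by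
          by_contra h
          push_neg at h
          rw [Finset.sum_eq_zero (fun x _ => h x)] at hr1
          exact zero_ne_one hr1
        obtain ⟨x0, hx0⟩ := hx0
        have hx0B : x0 ∈ B i := by
          by_contra h
          exact hx0 (hrsupp x0 h)
        have hq0 : mix (α, rr) x0 = α i * rr i x0 := hcol x0 hx0B
        have hαi : 0 < α i := by
          rcases (show (0:ℝ) ≤ α i from hαA.1 i).lt_or_eq with h | h
          · exact h
          · exact absurd (by rw [hq0, ← h, zero_mul]) (hcond x0 hx0)
        have hαi1 : α i ≤ 1 := by
          calc α i ≤ ∑ j, α j :=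
                Finset.single_le_sum (fun j _ => show (0:ℝ) ≤ α j from hαA.1 j)
                  (Finset.mem_univ i)
          _ = 1 := hαA.2
        have hmemB : ∀ x, rdist x ≠ 0 → x ∈ B i := by
          intro x hx
          by_contra h
          exact hx (hrsupp x h)
        have hcond' : ∀ x, rdist x ≠ 0 → rr i x ≠ 0 := by
          intro x hx
          have h := hcond x hx
          rw [hcol x (hmemB x hx)] at h
          exact right_ne_zero_of_mul h
        refine le_trans (iInf₂_le (rr i) (hrrK i (Set.mem_univ i))) ?_
        rw [KL_eq_coe' hcond', KL_eq_coe' hcond, EReal.coe_le_coe_iff]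
        apply Finset.sum_le_sum
        intro x _
        by_cases hx : rdist x = 0
        · rw [hx, klTerm_zero', klTerm_zero']
        · have hxB : x ∈ B i := hmemB x hx
          have hqx : mix (α, rr) x = α i * rr i x := hcol x hxB
          have hri : 0 < rr i x :=
            lt_of_le_of_ne ((hCl i (hrrK i (Set.mem_univ i))).1 x) (Ne.symm (hcond' x hx))
          have hrx : 0 < rdist x := lt_of_le_of_ne (hr0 x) (Ne.symm hx)
          have hqpos : 0 < α i * rr i x := mul_pos hαi hri
          rw [hqx]
          unfold klTerm
          rw [if_neg hx, if_neg hx]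
          apply mul_le_mul_of_nonneg_left _ hrx.le
          apply Real.logb_le_logb_of_le (by norm_num) (div_pos hrx hri)
          apply (div_le_div_iff_of_pos_left hrx hri hqpos).mpr
          exact mul_le_of_le_one_left hri.le hαi1
      · rw [KL_eq_top' hcond]
        exact le_top
    exact le_trans step (le_iSup₂_of_le rdist ⟨hr0, hr1⟩ le_rfl)
end
end
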